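/- arXiv:2002.04565 — 7 statements merged into one kernel-verified Lean document; each statement's English description precedes it below -/
import Mathlib

section
/- Let N ≥ 2 and 1 ≤ k ≤ N−1. Let u : ℝ^N → ℝ be upper semicontinuous, one-dimensional (i.e. u(x) = v(x_N) for some v : ℝ → ℝ), with |u(x)| < 1 for all x, and assume u is a viscosity subsolution of P⁻_k(D²u) + u − u³ = 0 in ℝ^N. Then u(x) ≥ 0 for all x ∈ ℝ^N. -/
set_option maxHeartbeats 1000000


/-- The truncated Laplacian `P⁻ₖ(X)`: the sum of the `k` smallest eigenvalues of the
symmetric matrix `X`, expressed via the Ky Fan variational principle as the infimum of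
`∑ᵢ ⟨X vᵢ, vᵢ⟩` over orthonormal families `v₁, …, v_k`. -/
noncomputable def truncLap {N : ℕ} (k : ℕ) (X : Matrix (Fin N) (Fin N) ℝ) : ℝ :=
  sInf { s : ℝ | ∃ v : Fin k → (Fin N → ℝ),
    (∀ i j, dotProduct (v i) (v j) = if i = j then (1 : ℝ) else 0) ∧
    s = ∑ i, dotProduct (X.mulVec (v i)) (v i) }

/-- The Hessian matrix of `φ : ℝ^N → ℝ` at `x`. -/
noncomputable def hess {N : ℕ} (φ : EuclideanSpace ℝ (Fin N) → ℝ)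
    (x : EuclideanSpace ℝ (Fin N)) : Matrix (Fin N) (Fin N) ℝ :=
  fun i j => iteratedFDeriv ℝ 2 φ x ![EuclideanSpace.single i 1, EuclideanSpace.single j 1]

/-- `u` is a viscosity subsolution of `P⁻ₖ(D²u) + f(u) = 0` in `ℝ^N`. -/
def IsViscSubsol {N : ℕ} (k : ℕ) (f : ℝ → ℝ) (u : EuclideanSpace ℝ (Fin N) → ℝ) : Prop :=
  ∀ φ : EuclideanSpace ℝ (Fin N) → ℝ, ContDiff ℝ 2 φ →
    ∀ x₀, IsLocalMax (fun x => u x - φ x) x₀ →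
      0 ≤ truncLap k (hess φ x₀) + f (u x₀)

/-- `u` is a viscosity supersolution of `P⁻ₖ(D²u) + f(u) = 0` in `ℝ^N`. -/
def IsViscSupersol {N : ℕ} (k : ℕ) (f : ℝ → ℝ) (u : EuclideanSpace ℝ (Fin N) → ℝ) : Prop :=
  ∀ φ : EuclideanSpace ℝ (Fin N) → ℝ, ContDiff ℝ 2 φ →
    ∀ x₀, IsLocalMin (fun x => u x - φ x) x₀ →
      truncLap k (hess φ x₀) + f (u x₀) ≤ 0

/-- An upper semicontinuous real function attains its maximum on a nonempty compact set. -/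
lemma usc_exists_max {f : ℝ → ℝ} (hf : UpperSemicontinuous f) {K : Set ℝ}
    (hK : IsCompact K) (hne : K.Nonempty) : ∃ a ∈ K, ∀ x ∈ K, f x ≤ f a := by
  by_contra h
  push_neg at h
  have hcov : K ⊆ ⋃ y ∈ K, {x | f x < f y} := by
    intro x hx
    obtain ⟨y, hy, hxy⟩ := h x hx
    exact Set.mem_iUnion₂.2 ⟨y, hy, hxy⟩
  obtain ⟨b, hbK, hbfin, hbcov⟩ := hK.elim_finite_subcover_image
    (fun y _ => hf.isOpen_preimage (f y)) hcov
  have hbne : b.Nonempty := by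
    rcases hne with ⟨x, hx⟩
    rcases Set.mem_iUnion₂.1 (hbcov hx) with ⟨y, hy, _⟩
    exact ⟨y, hy⟩
  obtain ⟨y₀, hy₀, hmax⟩ := hbfin.toFinset.exists_max_image f
    (by simpa [Set.Finite.toFinset_nonempty] using hbne)
  rw [Set.Finite.mem_toFinset] at hy₀
  rcases Set.mem_iUnion₂.1 (hbcov (hbK hy₀)) with ⟨y', hy', hlt⟩
  exact absurd (hmax y' (hbfin.mem_toFinset.2 hy')) (not_le.2 hlt)

/-- any USC one-dimensional viscosity subsolution of
`P⁻ₖ(D²u) + u - u³ = 0` in `ℝ^N` (N = n+2 ≥ 2, 1 ≤ k ≤ N-1) with `|u| < 1`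
is nonnegative. -/
theorem stmt0 {n : ℕ} (k : ℕ) (hk1 : 1 ≤ k) (hk2 : k ≤ n + 1)
    (u : EuclideanSpace ℝ (Fin (n + 2)) → ℝ) (v : ℝ → ℝ)
    (husc : UpperSemicontinuous u)
    (h1d : ∀ x, u x = v (x (Fin.last (n + 1))))
    (hbd : ∀ x, |u x| < 1)
    (hsub : IsViscSubsol k (fun s => s - s ^ 3) u) :
    ∀ x, 0 ≤ u x := by
  classical
  set ℓ : Fin (n + 2) := Fin.last (n + 1) with hℓ
  -- the one-dimensional embedding
  set e : ℝ → EuclideanSpace ℝ (Fin (n + 2)) :=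
    fun t => t • (EuclideanSpace.single ℓ (1 : ℝ)) with he
  have he_apply : ∀ t, e t ℓ = t := by
    intro t
    simp [he, EuclideanSpace.single_apply]
  have hve : ∀ t, v t = u (e t) := by
    intro t; rw [h1d (e t), he_apply]
  have he_cont : Continuous e := continuous_id.smul continuous_const
  have hv_usc : UpperSemicontinuous v := by
    have h' : UpperSemicontinuous (u ∘ e) := UpperSemicontinuous.comp husc he_cont
    have hvfun : v = u ∘ e := funext fun t => hve t
    rw [hvfun]; exact h'
  have hv_bd : ∀ t, |v t| < 1 := fun t => by rw [hve t]; exact hbd (e t)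
  -- the projection
  set p : EuclideanSpace ℝ (Fin (n + 2)) →L[ℝ] ℝ := EuclideanSpace.proj ℓ with hp
  have hp_apply : ∀ x : EuclideanSpace ℝ (Fin (n + 2)), p x = x ℓ := fun x => rfl
  -- Key step: near every point there is a point where v ≥ 0.
  have key : ∀ t₀ r : ℝ, 0 < r → ∃ s, |s - t₀| ≤ r ∧ 0 ≤ v s := by
    intro t₀ r hr
    set M : ℝ := 3 / r ^ 2 with hM
    have hM_pos : 0 < M := by positivity
    have hMr : M * r ^ 2 = 3 := by rw [hM]; field_simp
    set ψ : ℝ → ℝ := fun s => M * ((s - t₀) * (s - t₀)) with hψ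
    set F : ℝ → ℝ := fun s => v s - ψ s with hF
    have hF_usc : UpperSemicontinuous F := by
      have hc : Continuous fun s => -ψ s := by fun_prop
      have h' := hv_usc.add (g := fun s => -ψ s) hc.upperSemicontinuous
      simpa [hF, sub_eq_add_neg] using h'
    set K : Set ℝ := Set.Icc (t₀ - r) (t₀ + r) with hK
    have hK_cpt : IsCompact K := isCompact_Icc
    have ht₀K : t₀ ∈ K := ⟨by linarith, by linarith⟩
    obtain ⟨tb, htbK, htb_max⟩ := usc_exists_max hF_usc hK_cpt ⟨t₀, ht₀K⟩
    have hFt₀ : F t₀ = v t₀ := by simp [hF, hψ]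
    have hFle : v t₀ ≤ F tb := by rw [← hFt₀]; exact htb_max t₀ ht₀K
    have hvt₀_lb : -1 < v t₀ := (abs_lt.1 (hv_bd t₀)).1
    have hvtb_ub : v tb < 1 := (abs_lt.1 (hv_bd tb)).2
    have hFtb : F tb = v tb - M * ((tb - t₀) * (tb - t₀)) := rfl
    have hquad : M * ((tb - t₀) * (tb - t₀)) < 2 := by nlinarith [hFle]
    have htb_int : tb ∈ Set.Ioo (t₀ - r) (t₀ + r) := by
      rcases htbK with ⟨h1, h2⟩
      constructor
      · rcases lt_or_eq_of_le h1 with h | h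
        · exact h
        · exfalso; rw [← h] at hquad; nlinarith
      · rcases lt_or_eq_of_le h2 with h | h
        · exact h
        · exfalso; rw [h] at hquad; nlinarith
    -- the test function
    set φ : EuclideanSpace ℝ (Fin (n + 2)) → ℝ :=
      fun x => M * ((p x - t₀) * (p x - t₀)) with hφdef
    have hφ_smooth : ContDiff ℝ 2 φ :=
      contDiff_const.mul ((p.contDiff.sub contDiff_const).mul (p.contDiff.sub contDiff_const))
    set xb : EuclideanSpace ℝ (Fin (n + 2)) := e tb with hxb
    have hxbℓ : xb ℓ = tb := he_apply tb
    have hφF : ∀ x : EuclideanSpace ℝ (Fin (n + 2)), u x - φ x = F (x ℓ) := by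
      intro x
      simp only [hφdef, hF, hψ, hp_apply, h1d x]
    have hloc : IsLocalMax (fun x => u x - φ x) xb := by
      have hnbhd : (fun x : EuclideanSpace ℝ (Fin (n + 2)) => x ℓ) ⁻¹'
          (Set.Ioo (t₀ - r) (t₀ + r)) ∈ nhds xb := by
        have hc : Continuous fun x : EuclideanSpace ℝ (Fin (n + 2)) => x ℓ := p.continuous
        exact hc.continuousAt.preimage_mem_nhds (Ioo_mem_nhds
          (by rw [hxbℓ]; exact htb_int.1) (by rw [hxbℓ]; exact htb_int.2))
      refine Filter.eventually_of_mem hnbhd ?_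
      intro x hx
      have hxK : x ℓ ∈ K := Set.Ioo_subset_Icc_self hx
      show u x - φ x ≤ u xb - φ xb
      rw [hφF x, hφF xb, hxbℓ]
      exact htb_max _ hxK
    -- compute the Hessian of φ
    set g : EuclideanSpace ℝ (Fin (n + 2)) → (EuclideanSpace ℝ (Fin (n + 2)) →L[ℝ] ℝ) :=
      fun x => (2 * M * (p x - t₀)) • p with hg
    have hA : ∀ x, HasFDerivAt φ (g x) x := by
      intro x
      have h1 : HasFDerivAt (fun y => p y - t₀) p x := p.hasFDerivAt.sub_const t₀
      have h2 := (h1.mul h1).const_mul M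
      refine h2.congr_fderiv ?_
      ext y
      simp [hg]
      ring
    have hB : HasFDerivAt g (((2 * M) • p).smulRight p) xb := by
      have h1 : HasFDerivAt (fun y => 2 * M * (p y - t₀)) ((2 * M) • p) xb :=
        (p.hasFDerivAt.sub_const t₀).const_mul (2 * M)
      have h2 := h1.smul (hasFDerivAt_const p xb)
      exact h2.congr_fderiv (by simp)
    have hfd : fderiv ℝ φ = g := funext fun x => (hA x).fderiv
    set d : Fin (n + 2) → ℝ := fun i => if i = ℓ then 1 else 0 with hd
    have hsingle : ∀ i : Fin (n + 2), p (EuclideanSpace.single i (1 : ℝ)) = d i := by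
      intro i
      rw [hp_apply]
      by_cases hi : i = ℓ
      · simp [hi, hd, EuclideanSpace.single_apply]
      · simp [hd, hi, EuclideanSpace.single_apply, Ne.symm hi]
    have hH : ∀ i j, hess φ xb i j = 2 * M * (d i * d j) := by
      intro i j
      rw [hess, iteratedFDeriv_two_apply, hfd, hB.fderiv]
      simp only [Matrix.cons_val_zero, Matrix.cons_val_one, Matrix.head_cons,
        ContinuousLinearMap.smulRight_apply, ContinuousLinearMap.smul_apply, smul_eq_mul,
        hsingle]
      ring
    have hdsum : ∀ w : Fin (n + 2) → ℝ, (∑ j, d j * w j) = w ℓ := by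
      intro w
      simp [hd, ite_mul, Finset.sum_ite_eq']
    have hquadform : ∀ w : Fin (n + 2) → ℝ,
        dotProduct ((hess φ xb).mulVec w) w = 2 * M * (w ℓ * w ℓ) := by
      intro w
      simp only [Matrix.mulVec, dotProduct]
      have hrow : ∀ i, (∑ j, hess φ xb i j * w j) = 2 * M * d i * w ℓ := by
        intro i
        rw [← hdsum w, Finset.mul_sum]
        exact Finset.sum_congr rfl fun j _ => by rw [hH i j]; ring
      rw [Finset.sum_congr rfl fun i _ => by rw [hrow i]]
      have : (∑ i, 2 * M * d i * w ℓ * w i) = 2 * M * w ℓ * (∑ i, d i * w i) := by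
        rw [Finset.mul_sum]
        exact Finset.sum_congr rfl fun i _ => by ring
      rw [this, hdsum w]
      ring
    -- truncLap is ≤ 0
    have hvisc := hsub φ hφ_smooth xb hloc
    set emb : Fin k → Fin (n + 2) := fun i => Fin.castLE (by omega) i with hemb
    have hembne : ∀ i : Fin k, emb i ≠ ℓ := by
      intro i h
      have h1 : (emb i).val = i.val := rfl
      have h2 : (ℓ : Fin (n + 2)).val = n + 1 := rfl
      have := i.2
      omega
    set vv : Fin k → (Fin (n + 2) → ℝ) := fun i => fun j => if j = emb i then 1 else 0 with hvv
    have horth : ∀ a b, dotProduct (vv a) (vv b) = if a = b then (1 : ℝ) else 0 := by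
      intro a b
      by_cases hab : a = b
      · subst hab
        simp [dotProduct, hvv, Finset.sum_ite_eq']
      · have hne : emb a ≠ emb b := by
          intro h
          exact hab (Fin.castLE_injective _ h)
        rw [if_neg hab]
        apply Finset.sum_eq_zero
        intro j _
        by_cases h1 : j = emb a
        · simp [hvv, h1, hne]
        · simp [hvv, h1]
    have hvvℓ : ∀ i : Fin k, vv i ℓ = 0 := by
      intro i
      simp only [hvv]
      exact if_neg fun h => hembne i h.symm
    have hmem : (0 : ℝ) ∈ { s : ℝ | ∃ w : Fin k → (Fin (n + 2) → ℝ),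
        (∀ i j, dotProduct (w i) (w j) = if i = j then (1 : ℝ) else 0) ∧
        s = ∑ i, dotProduct ((hess φ xb).mulVec (w i)) (w i) } := by
      refine ⟨vv, horth, ?_⟩
      symm
      apply Finset.sum_eq_zero
      intro i _
      rw [hquadform (vv i), hvvℓ i]
      ring
    have hbdd : BddBelow { s : ℝ | ∃ w : Fin k → (Fin (n + 2) → ℝ),
        (∀ i j, dotProduct (w i) (w j) = if i = j then (1 : ℝ) else 0) ∧
        s = ∑ i, dotProduct ((hess φ xb).mulVec (w i)) (w i) } := by
      refine ⟨0, ?_⟩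
      rintro s ⟨w, -, rfl⟩
      apply Finset.sum_nonneg
      intro i _
      rw [hquadform (w i)]
      nlinarith [mul_self_nonneg (w i ℓ), hM_pos]
    have htrunc : truncLap k (hess φ xb) ≤ 0 := csInf_le hbdd hmem
    have hub : |u xb| < 1 := hbd xb
    have huge : 0 ≤ u xb - u xb ^ 3 := by
      have := hvisc
      simp only at this
      linarith
    have hu_nonneg : 0 ≤ u xb := by
      by_contra hneg
      push_neg at hneg
      have h1 : -1 < u xb := (abs_lt.1 hub).1
      have hprod : 0 < (-(u xb)) * ((1 - u xb) * (1 + u xb)) :=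
        mul_pos (by linarith) (mul_pos (by linarith) (by linarith))
      nlinarith [hprod, huge]
    refine ⟨tb, ?_, ?_⟩
    · rcases htbK with ⟨h1, h2⟩
      rw [abs_le]
      constructor <;> linarith
    · rw [hve tb]
      exact hu_nonneg
  -- deduce nonnegativity from USC
  intro x
  rw [h1d x]
  by_contra hneg
  push_neg at hneg
  have hev : ∀ᶠ s in nhds (x ℓ), v s < 0 := hv_usc (x ℓ) 0 hneg
  rw [Metric.eventually_nhds_iff] at hev
  obtain ⟨δ, hδ, hball⟩ := hev
  obtain ⟨s, hs1, hs2⟩ := key (x ℓ) (δ / 2) (by linarith)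
  have : v s < 0 := hball (by rw [Real.dist_eq]; linarith [abs_nonneg (s - x ℓ)])
  linarith
end

section
/- Let v : ℝ → ℝ be a C² function with |v(t)| < 1 for all t ∈ ℝ, satisfying min(v''(t), 0) + v(t) − v(t)³ = 0 for every t ∈ ℝ. Then v ≡ 0. -/
/-- if `v : ℝ → ℝ` is C², `|v| < 1`, and
`min(v''(t), 0) + v(t) - v(t)³ = 0` for every `t` (the classical one-dimensional form of
`P⁻ₖ(D²u) + u - u³ = 0`), then `v ≡ 0`. -/
theorem stmt1 (v : ℝ → ℝ) (hv : ContDiff ℝ 2 v)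
    (hbd : ∀ t, |v t| < 1)
    (heq : ∀ t, min (deriv (deriv v) t) 0 + v t - (v t) ^ 3 = 0) :
    ∀ t, v t = 0 := by
  have h2 : ContDiff ℝ ((1:ℕ)+1) v := by exact_mod_cast hv
  have hc1 : ContDiff ℝ 1 (deriv v) := (contDiff_succ_iff_deriv.mp h2).2.2
  have hd1 : Differentiable ℝ v := (contDiff_succ_iff_deriv.mp h2).1
  have hd2 : Differentiable ℝ (deriv v) := hc1.differentiable one_ne_zero
  -- v ≥ 0 everywhere
  have hpos : ∀ t, 0 ≤ v t := by
    intro t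
    have h := heq t
    have hb := abs_lt.mp (hbd t)
    have hm : min (deriv (deriv v) t) 0 ≤ 0 := min_le_right _ _
    have hvv : 0 ≤ v t - v t ^ 3 := by linarith
    by_contra hn
    push_neg at hn
    have hprod : v t * ((1 - v t) * (1 + v t)) < 0 :=
      mul_neg_of_neg_of_pos hn (mul_pos (by linarith) (by linarith))
    nlinarith
  -- at zeros of v, v' = 0
  have hzero : ∀ t, v t = 0 → deriv v t = 0 := by
    intro t ht
    have : IsLocalMin v t := by
      apply IsMinOn.isLocalMin (s := Set.univ)
      · intro s _
        simp only [Set.mem_setOf_eq, ht]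
        exact hpos s
      · exact Filter.univ_mem
    exact this.deriv_eq_zero
  -- where v > 0, the ODE holds
  have hode : ∀ t, 0 < v t → deriv (deriv v) t = v t ^ 3 - v t := by
    intro t ht
    have h := heq t
    rcases le_or_gt (deriv (deriv v) t) 0 with h1 | h1
    · rw [min_eq_left h1] at h; linarith
    · exfalso
      rw [min_eq_right h1.le] at h
      have hb := abs_lt.mp (hbd t)
      have hprod : 0 < v t * ((1 - v t) * (1 + v t)) :=
        mul_pos ht (mul_pos (by linarith) (by linarith))
      nlinarith
  -- energy is constant
  set E : ℝ → ℝ := fun t => (deriv v t)^2/2 + (v t)^2/2 - (v t)^4/4 with hE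
  have hEderiv : ∀ t, HasDerivAt E 0 t := by
    intro t
    have hv' : HasDerivAt v (deriv v t) t := (hd1 t).hasDerivAt
    have hv'' : HasDerivAt (deriv v) (deriv (deriv v) t) t := (hd2 t).hasDerivAt
    have H := (((hv''.pow 2).div_const 2).add ((hv'.pow 2).div_const 2)).sub
      ((hv'.pow 4).div_const 4)
    refine H.congr_deriv ?_
    rcases eq_or_lt_of_le (hpos t) with h0 | h0
    · rw [hzero t h0.symm]; push_cast; ring
    · rw [hode t h0]; push_cast; ring
  have hEconst : ∀ s t, E s = E t :=
    is_const_of_deriv_eq_zero (fun t => (hEderiv t).differentiableAt)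
      (fun t => (hEderiv t).deriv)
  by_cases hex : ∃ a, v a = 0
  · obtain ⟨a, ha⟩ := hex
    intro t
    have hEa : E a = 0 := by
      simp only [hE]; rw [ha, hzero a ha]; norm_num
    have hEt : E t = 0 := (hEconst t a).trans hEa
    simp only [hE] at hEt
    have hb := abs_lt.mp (hbd t)
    have hsq : v t ^ 2 ≤ 1 := by nlinarith
    have hprod : 0 ≤ v t ^ 2 * (1 - v t ^ 2) :=
      mul_nonneg (sq_nonneg _) (by linarith)
    have h1 : 0 ≤ (deriv v t)^2 := sq_nonneg _
    have hvsq : v t ^ 2 = 0 := by nlinarith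
    exact pow_eq_zero_iff (n := 2) (by norm_num) |>.mp hvsq
  · push_neg at hex
    exfalso
    have hpos' : ∀ t, 0 < v t := fun t => lt_of_le_of_ne (hpos t) (Ne.symm (hex t))
    have hneg : ∀ t, deriv (deriv v) t < 0 := by
      intro t
      rw [hode t (hpos' t)]
      have hb := abs_lt.mp (hbd t)
      have hprod : 0 < v t * ((1 - v t) * (1 + v t)) :=
        mul_pos (hpos' t) (mul_pos (by linarith) (by linarith))
      nlinarith
    have hanti : StrictAnti (deriv v) := strictAnti_of_deriv_neg hneg
    have h01 : deriv v 1 < deriv v 0 := hanti zero_lt_one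
    rcases lt_or_ge (deriv v 1) 0 with hw | hw
    · -- slope negative at 1, go forward
      have hw' : deriv v 1 ≠ 0 := ne_of_lt hw
      set T : ℝ := 1 + (v 1 + 1)/(-(deriv v 1)) with hT
      have hT1 : 1 < T := by
        rw [hT]
        have : 0 < (v 1 + 1)/(-(deriv v 1)) :=
          div_pos (by linarith [hpos' 1]) (by linarith)
        linarith
      obtain ⟨c, hc, hceq⟩ := exists_deriv_eq_slope v hT1
        (hd1.continuous.continuousOn) (hd1.differentiableOn)
      have hcw : deriv v c < deriv v 1 := hanti hc.1
      have hslope : (v T - v 1)/(T - 1) < deriv v 1 := hceq ▸ hcw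
      have hT1' : 0 < T - 1 := by linarith
      have hlt : v T - v 1 < deriv v 1 * (T - 1) := by
        rw [div_lt_iff₀ hT1'] at hslope; linarith
      have hval : deriv v 1 * (T - 1) = -(v 1 + 1) := by
        rw [hT]; field_simp
        ring
      linarith [hpos' T]
    · -- slope positive at 0, go backward
      have hw0 : 0 < deriv v 0 := lt_of_le_of_lt hw h01
      have hw0' : deriv v 0 ≠ 0 := ne_of_gt hw0
      set T : ℝ := -(v 0 + 1)/(deriv v 0) with hT
      have hT0 : T < 0 := by
        rw [hT]
        apply div_neg_of_neg_of_pos _ hw0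
        linarith [hpos' 0]
      obtain ⟨c, hc, hceq⟩ := exists_deriv_eq_slope v hT0
        (hd1.continuous.continuousOn) (hd1.differentiableOn)
      have hcw : deriv v 0 < deriv v c := hanti hc.2
      have hslope : deriv v 0 < (v 0 - v T)/(0 - T) := hceq ▸ hcw
      have hT0' : 0 < 0 - T := by linarith
      have hlt : deriv v 0 * (0 - T) < v 0 - v T := by
        rw [lt_div_iff₀ hT0'] at hslope; linarith
      have hval : deriv v 0 * (0 - T) = v 0 + 1 := by
        rw [hT]; field_simp
        ring
      linarith [hpos' T]
end

section
/- Let N ≥ 2 and 1 ≤ k ≤ N−1. Define ũ : ℝ^N → ℝ by ũ(x) = tanh(x_N/√2) if x_N ≥ 0 and ũ(x) = 0 if x_N < 0. Then ũ is continuous, |ũ(x)| < 1 for all x, ũ is a viscosity solution of P⁻_k(D²u) + u − u³ = 0 in ℝ^N, and ũ(x', x_N) → 0 as x_N → −∞ while ũ(x', x_N) → 1 as x_N → +∞. -/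
section helpers
variable {N : ℕ}

-- quadratic form of hessian along a direction
lemma clm2_expand (B : EuclideanSpace ℝ (Fin N) →L[ℝ] EuclideanSpace ℝ (Fin N) →L[ℝ] ℝ)
    (v : EuclideanSpace ℝ (Fin N)) :
    B v v = ∑ i, ∑ j, B (EuclideanSpace.single i 1) (EuclideanSpace.single j 1) * v j * v i := by
  have hv : ∑ i, v i • EuclideanSpace.single i (1:ℝ) = v := by
    have := (EuclideanSpace.basisFun (Fin N) ℝ).sum_repr v
    simpa [EuclideanSpace.basisFun_apply, EuclideanSpace.basisFun_repr] using this
  conv_lhs => rw [← hv]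
  simp only [map_sum, map_smul, ContinuousLinearMap.sum_apply, ContinuousLinearMap.smul_apply,
    smul_eq_mul, Finset.mul_sum, Finset.sum_mul]
  rw [Finset.sum_comm]
  refine Finset.sum_congr rfl fun i _ => Finset.sum_congr rfl fun j _ => by ring

lemma line_hasDerivAt (x₀ v : EuclideanSpace ℝ (Fin N)) (t : ℝ) :
    HasDerivAt (fun s : ℝ => x₀ + s • v) v t := by
  simpa using ((hasDerivAt_id t).smul_const v).const_add x₀

lemma phi_line_deriv (φ : EuclideanSpace ℝ (Fin N) → ℝ) (hφ : ContDiff ℝ 2 φ)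
    (x₀ v : EuclideanSpace ℝ (Fin N)) (t : ℝ) :
    HasDerivAt (fun s : ℝ => φ (x₀ + s • v)) (fderiv ℝ φ (x₀ + t • v) v) t := by
  have hd : DifferentiableAt ℝ φ (x₀ + t • v) := (hφ.differentiable (by norm_num)).differentiableAt
  exact hd.hasFDerivAt.comp_hasDerivAt t (line_hasDerivAt x₀ v t)

lemma phi_line_deriv2 (φ : EuclideanSpace ℝ (Fin N) → ℝ) (hφ : ContDiff ℝ 2 φ)
    (x₀ v : EuclideanSpace ℝ (Fin N)) :
    HasDerivAt (fun t : ℝ => fderiv ℝ φ (x₀ + t • v) v)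
      (dotProduct ((hess φ x₀).mulVec (fun i => v i)) (fun i => v i)) 0 := by
  have hF : ContDiff ℝ 1 (fderiv ℝ φ) := hφ.fderiv_right (le_refl _)
  have hdF : DifferentiableAt ℝ (fderiv ℝ φ) (x₀ + (0:ℝ) • v) :=
    (hF.differentiable one_ne_zero).differentiableAt
  have h1 : HasDerivAt (fun t : ℝ => fderiv ℝ φ (x₀ + t • v))
      (fderiv ℝ (fderiv ℝ φ) (x₀ + (0:ℝ) • v) v) 0 :=
    hdF.hasFDerivAt.comp_hasDerivAt 0 (line_hasDerivAt x₀ v 0)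
  have h2 := h1.clm_apply (hasDerivAt_const (0:ℝ) v)
  simp only [map_zero, add_zero] at h2
  refine h2.congr_deriv ?_
  have hx : x₀ + (0:ℝ) • v = x₀ := by simp
  rw [hx, clm2_expand (fderiv ℝ (fderiv ℝ φ) x₀) v]
  simp only [dotProduct, Matrix.mulVec, hess, iteratedFDeriv_two_apply]
  simp only [Matrix.cons_val_zero, Matrix.cons_val_one, Matrix.head_cons]
  refine Finset.sum_congr rfl fun i _ => ?_
  rw [Finset.sum_mul]

-- second derivative test
lemma second_test_max (g g' : ℝ → ℝ) (c : ℝ)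
    (hg : ∀ᶠ t in nhds (0:ℝ), HasDerivAt g (g' t) t)
    (hc : HasDerivAt g' c 0) (hmax : IsLocalMax g 0) : c ≤ 0 := by
  by_contra hpos
  push_neg at hpos
  have hg0 : HasDerivAt g (g' 0) 0 := hg.self_of_nhds
  have hd0 : g' 0 = 0 := by
    have := hmax.deriv_eq_zero
    rwa [hg0.deriv] at this
  have hslope := hasDerivAt_iff_tendsto_slope.mp hc
  have hev : ∀ᶠ t in nhdsWithin (0:ℝ) (Set.Ioi 0), 0 < g' t := by
    have h1 : ∀ᶠ t in nhdsWithin (0:ℝ) (Set.Ioi 0), 0 < slope g' 0 t := by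
      have : Filter.Tendsto (slope g' 0) (nhdsWithin 0 (Set.Ioi 0)) (nhds c) :=
        hslope.mono_left (nhdsWithin_mono _ (by intro x hx; simp at hx ⊢; exact ne_of_gt hx))
      exact this.eventually (eventually_gt_nhds hpos)
    filter_upwards [h1, self_mem_nhdsWithin] with t ht ht'
    have ht'' : (0:ℝ) < t := ht'
    have hs : slope g' 0 t = g' t / t := by simp [slope_def_field, hd0]
    rw [hs] at ht
    have h2 := mul_pos ht ht''
    rwa [div_mul_cancel₀ _ (ne_of_gt ht'')] at h2
  obtain ⟨δ₁, hδ₁mem, hI⟩ := mem_nhdsGT_iff_exists_Ioo_subset.mp hev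
  have hδ₁ : (0:ℝ) < δ₁ := hδ₁mem
  obtain ⟨δ₂, hδ₂, hJ⟩ := Metric.eventually_nhds_iff.mp hg
  obtain ⟨δ₃, hδ₃, hK⟩ := Metric.eventually_nhds_iff.mp hmax
  set t₀ := min δ₁ (min δ₂ δ₃) / 2 with ht₀def
  have hmin3 : 0 < min δ₁ (min δ₂ δ₃) := lt_min hδ₁ (lt_min hδ₂ hδ₃)
  have ht₀pos : 0 < t₀ := by positivity
  have ht₀1 : t₀ < δ₁ := by
    have := min_le_left δ₁ (min δ₂ δ₃); rw [ht₀def]; linarith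
  have ht₀2 : t₀ < δ₂ := by
    have h := min_le_right δ₁ (min δ₂ δ₃); have := min_le_left δ₂ δ₃
    rw [ht₀def]; linarith
  have ht₀3 : t₀ < δ₃ := by
    have h := min_le_right δ₁ (min δ₂ δ₃); have := min_le_right δ₂ δ₃
    rw [ht₀def]; linarith
  have hder : ∀ x ∈ Set.Icc (0:ℝ) t₀, HasDerivAt g (g' x) x := by
    intro x hx
    apply hJ
    rw [Real.dist_eq, sub_zero, abs_of_nonneg hx.1]
    exact lt_of_le_of_lt hx.2 ht₀2
  have hcont : ContinuousOn g (Set.Icc 0 t₀) := fun x hx =>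
    ((hder x hx).continuousAt).continuousWithinAt
  obtain ⟨ξ, hξmem, hξ⟩ := exists_hasDerivAt_eq_slope g g' ht₀pos hcont
    (fun x hx => hder x ⟨le_of_lt hx.1, le_of_lt hx.2⟩)
  have hξpos : 0 < g' ξ := hI ⟨hξmem.1, lt_trans hξmem.2 ht₀1⟩
  rw [hξ] at hξpos
  have hgt : g 0 < g t₀ := by
    rw [sub_zero] at hξpos
    have h2 := mul_pos hξpos ht₀pos
    rw [div_mul_cancel₀ _ (ne_of_gt ht₀pos)] at h2
    linarith
  have hle : g t₀ ≤ g 0 := by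
    apply hK
    rw [Real.dist_eq, sub_zero, abs_of_nonneg (le_of_lt ht₀pos)]
    exact ht₀3
  linarith

lemma second_test_min (g g' : ℝ → ℝ) (c : ℝ)
    (hg : ∀ᶠ t in nhds (0:ℝ), HasDerivAt g (g' t) t)
    (hc : HasDerivAt g' c 0) (hmin : IsLocalMin g 0) : 0 ≤ c := by
  have := second_test_max (fun t => -g t) (fun t => -g' t) (-c)
    (by filter_upwards [hg] with t ht using ht.neg) hc.neg hmin.neg
  linarith

-- key directional inequalities
lemma key_max (φ : EuclideanSpace ℝ (Fin N) → ℝ) (hφ : ContDiff ℝ 2 φ)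
    (x₀ v : EuclideanSpace ℝ (Fin N)) (m m' : ℝ → ℝ) (c : ℝ)
    (hm : ∀ t, HasDerivAt m (m' t) t) (hm' : HasDerivAt m' c 0)
    (H : IsLocalMax (fun t : ℝ => m t - φ (x₀ + t • v)) 0) :
    c ≤ dotProduct ((hess φ x₀).mulVec (fun i => v i)) (fun i => v i) := by
  have h := second_test_max (fun t => m t - φ (x₀ + t • v))
    (fun t => m' t - fderiv ℝ φ (x₀ + t • v) v)
    (c - dotProduct ((hess φ x₀).mulVec (fun i => v i)) (fun i => v i))
    (Filter.Eventually.of_forall fun t => (hm t).sub (phi_line_deriv φ hφ x₀ v t))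
    (hm'.sub (phi_line_deriv2 φ hφ x₀ v)) H
  linarith

lemma key_min (φ : EuclideanSpace ℝ (Fin N) → ℝ) (hφ : ContDiff ℝ 2 φ)
    (x₀ v : EuclideanSpace ℝ (Fin N)) (m m' : ℝ → ℝ) (c : ℝ)
    (hm : ∀ t, HasDerivAt m (m' t) t) (hm' : HasDerivAt m' c 0)
    (H : IsLocalMin (fun t : ℝ => m t - φ (x₀ + t • v)) 0) :
    dotProduct ((hess φ x₀).mulVec (fun i => v i)) (fun i => v i) ≤ c := by
  have h := second_test_min (fun t => m t - φ (x₀ + t • v))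
    (fun t => m' t - fderiv ℝ φ (x₀ + t • v) v)
    (c - dotProduct ((hess φ x₀).mulVec (fun i => v i)) (fun i => v i))
    (Filter.Eventually.of_forall fun t => (hm t).sub (phi_line_deriv φ hφ x₀ v t))
    (hm'.sub (phi_line_deriv2 φ hφ x₀ v)) H
  linarith

-- restriction of local extrema to lines
lemma isLocalMax_line {f : EuclideanSpace ℝ (Fin N) → ℝ} {x₀ : EuclideanSpace ℝ (Fin N)}
    (h : IsLocalMax f x₀) (v : EuclideanSpace ℝ (Fin N)) :
    IsLocalMax (fun t : ℝ => f (x₀ + t • v)) 0 := by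
  have hL : Filter.Tendsto (fun t : ℝ => x₀ + t • v) (nhds 0) (nhds x₀) := by
    have hc : Continuous (fun t : ℝ => x₀ + t • v) :=
      continuous_const.add (continuous_id.smul continuous_const)
    have := hc.tendsto 0
    simpa using this
  have := hL.eventually h
  filter_upwards [this] with t ht
  simpa using ht

lemma isLocalMin_line {f : EuclideanSpace ℝ (Fin N) → ℝ} {x₀ : EuclideanSpace ℝ (Fin N)}
    (h : IsLocalMin f x₀) (v : EuclideanSpace ℝ (Fin N)) :
    IsLocalMin (fun t : ℝ => f (x₀ + t • v)) 0 := by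
  have := isLocalMax_line (f := fun x => -f x) h.neg v
  simpa using this.neg

end helpers

section tanhfacts

lemma tanh_hasDerivAt (x : ℝ) : HasDerivAt Real.tanh (1 - Real.tanh x ^ 2) x := by
  have h : HasDerivAt (fun y => Real.sinh y / Real.cosh y)
      ((Real.cosh x * Real.cosh x - Real.sinh x * Real.sinh x) / Real.cosh x ^ 2) x :=
    (Real.hasDerivAt_sinh x).div (Real.hasDerivAt_cosh x) (ne_of_gt (Real.cosh_pos x))
  have he : (fun y => Real.sinh y / Real.cosh y) = Real.tanh :=
    funext fun y => (Real.tanh_eq_sinh_div_cosh y).symm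
  rw [he] at h
  convert h using 1
  have hc := Real.cosh_sq_sub_sinh_sq x
  have hcp := (Real.cosh_pos x).ne'
  rw [Real.tanh_eq_sinh_div_cosh]
  field_simp

lemma abs_tanh_lt_one (x : ℝ) : |Real.tanh x| < 1 := by
  rw [Real.tanh_eq_sinh_div_cosh, abs_div, abs_of_pos (Real.cosh_pos x),
    div_lt_one (Real.cosh_pos x), abs_lt]
  constructor
  · have h := Real.sinh_lt_cosh (-x)
    rw [Real.sinh_neg, Real.cosh_neg] at h
    linarith
  · exact Real.sinh_lt_cosh x

lemma tanh_tendsto_one : Filter.Tendsto Real.tanh Filter.atTop (nhds 1) := by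
  have hrepr : ∀ x : ℝ, Real.tanh x = (1 - Real.exp (-(2*x))) / (1 + Real.exp (-(2*x))) := by
    intro x
    rw [Real.tanh_eq_sinh_div_cosh, Real.sinh_eq, Real.cosh_eq]
    have h1 : Real.exp (-(2*x)) = Real.exp (-x) * Real.exp (-x) := by
      rw [← Real.exp_add]; ring_nf
    have h2 : Real.exp x * Real.exp (-x) = 1 := by
      rw [← Real.exp_add]; simp
    have h3 : (0:ℝ) < Real.exp x + Real.exp (-x) := by positivity
    have h4 : (0:ℝ) < 1 + Real.exp (-(2*x)) := by positivity
    field_simp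
    rw [show -(x*2) = -(2*x) by ring, h1]
    linear_combination (2 * Real.exp (-x)) * h2
  have h0 : Filter.Tendsto (fun x : ℝ => Real.exp (-(2*x))) Filter.atTop (nhds 0) := by
    apply Real.tendsto_exp_atBot.comp
    have h2x : Filter.Tendsto (fun x : ℝ => 2*x) Filter.atTop Filter.atTop :=
      Filter.tendsto_id.const_mul_atTop two_pos
    exact Filter.tendsto_neg_atBot_iff.mpr h2x
  have h5 : Filter.Tendsto (fun x : ℝ => (1 - Real.exp (-(2*x))) / (1 + Real.exp (-(2*x))))
      Filter.atTop (nhds ((1-0)/(1+0))) := by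
    apply Filter.Tendsto.div ((tendsto_const_nhds).sub h0) ((tendsto_const_nhds).add h0)
    norm_num
  simp only [sub_zero, add_zero, div_one] at h5
  exact h5.congr (fun x => (hrepr x).symm)

noncomputable def QQ (s : ℝ) : ℝ := Real.tanh (s / Real.sqrt 2)
noncomputable def QQ' (s : ℝ) : ℝ := (1 - QQ s ^ 2) / Real.sqrt 2

lemma QQ_hasDerivAt (s : ℝ) : HasDerivAt QQ (QQ' s) s := by
  have h1 : HasDerivAt (fun t : ℝ => t / Real.sqrt 2) (1 / Real.sqrt 2) s :=
    (hasDerivAt_id s).div_const _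
  have h2 := (tanh_hasDerivAt (s / Real.sqrt 2)).comp s h1
  have h3 : (1 - Real.tanh (s / Real.sqrt 2) ^ 2) * (1 / Real.sqrt 2) = QQ' s := by
    rw [QQ', QQ]; ring
  rw [h3] at h2
  exact h2

lemma QQ'_hasDerivAt (s : ℝ) : HasDerivAt QQ' (QQ s ^ 3 - QQ s) s := by
  have h1 := (((QQ_hasDerivAt s).pow 2).const_sub 1).div_const (Real.sqrt 2)
  have he : -(↑(2:ℕ) * QQ s ^ (2-1) * QQ' s) / Real.sqrt 2 = QQ s ^ 3 - QQ s := by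
    rw [QQ']
    have h2 : Real.sqrt 2 * Real.sqrt 2 = 2 := Real.mul_self_sqrt (by norm_num)
    have hne : Real.sqrt 2 ≠ 0 := by positivity
    push_cast
    field_simp
    rw [Real.sq_sqrt (by norm_num : (0:ℝ) ≤ 2)]
    ring
  rw [he] at h1
  exact h1

lemma QQ_zero : QQ 0 = 0 := by simp [QQ, Real.tanh_eq_sinh_div_cosh]

lemma abs_QQ_lt_one (s : ℝ) : |QQ s| < 1 := abs_tanh_lt_one _

lemma QQ_nonneg {s : ℝ} (hs : 0 ≤ s) : 0 ≤ QQ s := by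
  rw [QQ, Real.tanh_eq_sinh_div_cosh]
  apply div_nonneg _ (le_of_lt (Real.cosh_pos _))
  exact Real.sinh_nonneg_iff.mpr (by positivity)

end tanhfacts

section setfacts
variable {N k : ℕ}

lemma dp_sum_right (w : Fin N → ℝ) (f : Fin k → Fin N → ℝ) :
    dotProduct w (∑ i, f i) = ∑ i, dotProduct w (f i) := by
  simp only [dotProduct, Finset.sum_apply, Finset.mul_sum]
  exact Finset.sum_comm

lemma dp_sum_left (w : Fin N → ℝ) (f : Fin k → Fin N → ℝ) :
    dotProduct (∑ i, f i) w = ∑ i, dotProduct (f i) w := by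
  simp only [dotProduct, Finset.sum_apply, Finset.sum_mul]
  exact Finset.sum_comm

lemma bessel (v : Fin k → (Fin N → ℝ)) (l : Fin N)
    (hv : ∀ i j, dotProduct (v i) (v j) = if i = j then (1:ℝ) else 0) :
    ∑ i, (v i l) ^ 2 ≤ 1 := by
  set q : Fin N → ℝ := (Pi.single l 1 : Fin N → ℝ) - ∑ i, (v i l) • v i with hq
  have hqq : 0 ≤ dotProduct q q := by
    rw [dotProduct]
    exact Finset.sum_nonneg fun i _ => mul_self_nonneg _
  have hexp : dotProduct q q = 1 - ∑ i, (v i l) ^ 2 := by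
    rw [hq]
    rw [sub_dotProduct, dotProduct_sub, dotProduct_sub]
    rw [single_dotProduct, dotProduct_single]
    simp only [one_mul, mul_one]
    have e1 : dotProduct (Pi.single l 1 : Fin N → ℝ) (∑ i, (v i l) • v i)
        = ∑ i, (v i l)^2 := by
      rw [dp_sum_right]
      refine Finset.sum_congr rfl fun i _ => ?_
      rw [dotProduct_smul, single_dotProduct]
      simp [sq, smul_eq_mul]
    have e3 : dotProduct (∑ i, (v i l) • v i) (∑ j, (v j l) • v j)
        = ∑ i, (v i l)^2 := by
      rw [dp_sum_left]
      have h4 : ∀ i, dotProduct ((v i l) • v i) (∑ j, (v j l) • v j) = (v i l)^2 := by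
        intro i
        rw [dp_sum_right]
        have hterm : ∀ j, dotProduct ((v i l) • v i) ((v j l) • v j)
            = if i = j then (v i l)^2 else 0 := by
          intro j
          rw [smul_dotProduct, dotProduct_smul, hv i j]
          by_cases h : i = j <;> simp [h, sq, smul_eq_mul] <;> ring
        simp only [hterm]
        simp
      simp only [h4]
    rw [e1, e3]
    have e4 : (∑ i, (v i l) • v i) l = ∑ i, (v i l)^2 := by
      simp [Finset.sum_apply, sq]
    rw [e4, Pi.single_eq_same]
    ring
  linarith [hexp ▸ hqq]

lemma unit_comp_le (v : Fin N → ℝ) (hv : dotProduct v v = 1) (l : Fin N) :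
    |v l| ≤ 1 := by
  have h1 : ∑ i, v i * v i = 1 := hv
  have h2 : v l * v l ≤ 1 := by
    have h3 := Finset.single_le_sum (f := fun i => v i * v i)
      (fun i _ => mul_self_nonneg (v i)) (Finset.mem_univ l)
    simpa [h1] using h3
  rw [abs_le]
  constructor <;> nlinarith

lemma orth_single {σ : Fin k → Fin N} (hσ : Function.Injective σ) :
    ∀ i j, dotProduct (Pi.single (σ i) 1 : Fin N → ℝ) (Pi.single (σ j) 1)
      = if i = j then (1:ℝ) else 0 := by
  intro i j
  rw [single_dotProduct, one_mul, Pi.single_apply]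
  by_cases h : i = j
  · simp [h]
  · have : σ i ≠ σ j := fun hc => h (hσ hc)
    simp [this, h]

lemma truncSet_nonempty (hkN : k ≤ N) (X : Matrix (Fin N) (Fin N) ℝ) :
    Set.Nonempty { s : ℝ | ∃ v : Fin k → (Fin N → ℝ),
      (∀ i j, dotProduct (v i) (v j) = if i = j then (1 : ℝ) else 0) ∧
      s = ∑ i, dotProduct (X.mulVec (v i)) (v i) } := by
  refine ⟨_, fun i => Pi.single (Fin.castLE hkN i) 1, orth_single (fun a b hab => ?_), rfl⟩
  exact Fin.castLE_injective hkN hab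

lemma truncSet_bddBelow (X : Matrix (Fin N) (Fin N) ℝ) :
    BddBelow { s : ℝ | ∃ v : Fin k → (Fin N → ℝ),
      (∀ i j, dotProduct (v i) (v j) = if i = j then (1 : ℝ) else 0) ∧
      s = ∑ i, dotProduct (X.mulVec (v i)) (v i) } := by
  set C := ∑ i, ∑ j, |X i j| with hC
  refine ⟨-(k * C), ?_⟩
  rintro s ⟨v, hv, rfl⟩
  have hbound : ∀ m, -C ≤ dotProduct (X.mulVec (v m)) (v m) := by
    intro m
    have habs : |dotProduct (X.mulVec (v m)) (v m)| ≤ C := by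
      rw [dotProduct]
      calc |∑ i, (X.mulVec (v m)) i * v m i| ≤ ∑ i, |(X.mulVec (v m)) i * v m i| :=
            Finset.abs_sum_le_sum_abs _ _
        _ ≤ C := by
            rw [hC]
            apply Finset.sum_le_sum
            intro i _
            rw [abs_mul]
            have h1 : |(X.mulVec (v m)) i| ≤ ∑ j, |X i j| := by
              rw [Matrix.mulVec, dotProduct]
              calc |∑ j, X i j * v m j| ≤ ∑ j, |X i j * v m j| :=
                    Finset.abs_sum_le_sum_abs _ _
                _ ≤ ∑ j, |X i j| := by
                    apply Finset.sum_le_sum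
                    intro j _
                    rw [abs_mul]
                    have := unit_comp_le (v m) (by simpa using hv m m) j
                    nlinarith [abs_nonneg (X i j), abs_nonneg (v m j)]
            have h2 : |v m i| ≤ 1 := unit_comp_le (v m) (by simpa using hv m m) i
            calc |(X.mulVec (v m)) i| * |v m i| ≤ (∑ j, |X i j|) * 1 := by
                  apply mul_le_mul h1 h2 (abs_nonneg _)
                  exact Finset.sum_nonneg fun j _ => abs_nonneg _
              _ = ∑ j, |X i j| := mul_one _
    linarith [abs_le.mp habs |>.1]
  calc -(k * C) = ∑ _m : Fin k, (-C) := by simp [mul_comm]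
    _ ≤ ∑ m, dotProduct (X.mulVec (v m)) (v m) := Finset.sum_le_sum fun m _ => hbound m

end setfacts

lemma isLocalMax_congr_sub (A m0 g : ℝ → ℝ) (h : ∀ᶠ t in nhds (0:ℝ), A t = m0 t)
    (h0 : A 0 = m0 0) (H : IsLocalMax (fun t => A t - g t) 0) :
    IsLocalMax (fun t => m0 t - g t) 0 := by
  filter_upwards [H, h] with t h1 h2
  show m0 t - g t ≤ m0 0 - g 0
  have h1' : A t - g t ≤ A 0 - g 0 := h1
  rw [← h2, ← h0]
  exact h1'

lemma isLocalMin_congr_sub (A m0 g : ℝ → ℝ) (h : ∀ᶠ t in nhds (0:ℝ), A t = m0 t)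
    (h0 : A 0 = m0 0) (H : IsLocalMin (fun t => A t - g t) 0) :
    IsLocalMin (fun t => m0 t - g t) 0 := by
  filter_upwards [H, h] with t h1 h2
  show m0 0 - g 0 ≤ m0 t - g t
  have h1' : A 0 - g 0 ≤ A t - g t := h1
  rw [← h2, ← h0]
  exact h1'

-- derivative facts for t ↦ QQ (a + t*c)
lemma QQline_hasDerivAt (a c t : ℝ) :
    HasDerivAt (fun s : ℝ => QQ (a + s * c)) (QQ' (a + t * c) * c) t := by
  have h1 : HasDerivAt (fun s : ℝ => a + s * c) c t := by
    simpa using ((hasDerivAt_id t).mul_const c).const_add a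
  exact HasDerivAt.comp (h₂ := QQ) t (QQ_hasDerivAt (a + t * c)) h1

lemma QQline'_hasDerivAt (a c : ℝ) :
    HasDerivAt (fun s : ℝ => QQ' (a + s * c) * c) ((QQ a ^ 3 - QQ a) * c * c) 0 := by
  have h1 : HasDerivAt (fun s : ℝ => a + s * c) c 0 := by
    simpa using ((hasDerivAt_id (0:ℝ)).mul_const c).const_add a
  have h2 := ((QQ'_hasDerivAt (a + 0 * c)).comp 0 h1).mul_const c
  simpa using h2

lemma euclid_single_fun {N : ℕ} (b : Fin N) :
    (fun l => (EuclideanSpace.single b (1:ℝ)) l) = Pi.single b 1 := by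
  funext l; rw [EuclideanSpace.single_apply, Pi.single_apply]

/-- the one-dimensional function `ũ(x) = tanh(x_N/√2)` for `x_N ≥ 0`,
`ũ(x) = 0` for `x_N < 0`, is continuous, satisfies `|ũ| < 1`, is a viscosity solution of
`P⁻ₖ(D²u) + u - u³ = 0` in `ℝ^N`, and its profile tends to `0` at `-∞` and to `1` at `+∞`. -/
theorem stmt2 {n : ℕ} (k : ℕ) (hk1 : 1 ≤ k) (hk2 : k ≤ n + 1)
    (w : ℝ → ℝ)
    (hw : ∀ t : ℝ, w t = if 0 ≤ t then Real.tanh (t / Real.sqrt 2) else 0)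
    (u : EuclideanSpace ℝ (Fin (n + 2)) → ℝ)
    (hu : ∀ x, u x = w (x (Fin.last (n + 1)))) :
    Continuous u ∧ (∀ x, |u x| < 1) ∧
    IsViscSubsol k (fun s => s - s ^ 3) u ∧
    IsViscSupersol k (fun s => s - s ^ 3) u ∧
    Filter.Tendsto w Filter.atBot (nhds 0) ∧
    Filter.Tendsto w Filter.atTop (nhds 1) := by
  have hkN : k ≤ n + 2 := by omega
  have htanhc : Continuous Real.tanh := by
    rw [show Real.tanh = fun y => Real.sinh y / Real.cosh y from
      funext fun y => Real.tanh_eq_sinh_div_cosh y]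
    exact Real.continuous_sinh.div Real.continuous_cosh fun x => ne_of_gt (Real.cosh_pos x)
  have hw0 : w 0 = 0 := by rw [hw]; simp [Real.tanh_eq_sinh_div_cosh]
  have hwQ : ∀ t, 0 ≤ t → w t = QQ t := fun t ht => by rw [hw, if_pos ht]; rfl
  have hwneg : ∀ t, t < 0 → w t = 0 := fun t ht => by rw [hw, if_neg (not_le.mpr ht)]
  have hwc : Continuous w := by
    have hrw : w = fun t : ℝ => if (fun _ : ℝ => (0:ℝ)) t ≤ id t
        then Real.tanh (t / Real.sqrt 2) else 0 := funext fun t => hw t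
    rw [hrw]
    apply Continuous.if_le (htanhc.comp (continuous_id.div_const _)) continuous_const
      continuous_const continuous_id
    intro t ht
    simp only [Function.comp_apply, id_eq] at ht ⊢
    rw [← ht]
    simp [Real.tanh_eq_sinh_div_cosh]
  -- eventual description of u along lines
  have happly : ∀ (x₀ v : EuclideanSpace ℝ (Fin (n+2))) (t : ℝ),
      (x₀ + t • v) (Fin.last (n+1)) = x₀ (Fin.last (n+1)) + t * v (Fin.last (n+1)) :=
    fun _ _ _ => rfl
  have hulineQ : ∀ (x₀ v : EuclideanSpace ℝ (Fin (n+2))), 0 < x₀ (Fin.last (n+1)) →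
      |v (Fin.last (n+1))| ≤ 1 →
      ∀ᶠ t in nhds (0:ℝ),
        u (x₀ + t • v) = QQ (x₀ (Fin.last (n+1)) + t * v (Fin.last (n+1))) := by
    intro x₀ v ha hc
    filter_upwards [eventually_abs_sub_lt 0 ha] with t ht
    have h1 : |t| < x₀ (Fin.last (n+1)) := by simpa using ht
    have h2 : 0 < x₀ (Fin.last (n+1)) + t * v (Fin.last (n+1)) := by
      have h3 : |t * v (Fin.last (n+1))| ≤ |t| := by
        rw [abs_mul]
        nlinarith [abs_nonneg t]
      have := neg_abs_le (t * v (Fin.last (n+1)))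
      linarith
    rw [hu, happly, hwQ _ (le_of_lt h2)]
  have huline0 : ∀ (x₀ v : EuclideanSpace ℝ (Fin (n+2))), x₀ (Fin.last (n+1)) < 0 →
      |v (Fin.last (n+1))| ≤ 1 →
      ∀ᶠ t in nhds (0:ℝ), u (x₀ + t • v) = 0 := by
    intro x₀ v ha hc
    filter_upwards [eventually_abs_sub_lt 0 (neg_pos.mpr ha)] with t ht
    have h1 : |t| < -(x₀ (Fin.last (n+1))) := by simpa using ht
    have h2 : x₀ (Fin.last (n+1)) + t * v (Fin.last (n+1)) < 0 := by
      have h3 : |t * v (Fin.last (n+1))| ≤ |t| := by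
        rw [abs_mul]
        nlinarith [abs_nonneg t]
      have := le_abs_self (t * v (Fin.last (n+1)))
      linarith
    rw [hu, happly, hwneg _ h2]
  refine ⟨?_, ?_, ?_, ?_, ?_, ?_⟩
  · -- continuity
    have : u = w ∘ (fun x : EuclideanSpace ℝ (Fin (n+2)) => x (Fin.last (n+1))) :=
      funext fun x => hu x
    rw [this]
    exact hwc.comp (PiLp.continuous_apply _ _ _)
  · -- |u| < 1
    intro x
    rw [hu]
    rcases le_or_gt 0 (x (Fin.last (n+1))) with h | h
    · rw [hwQ _ h]; exact abs_QQ_lt_one _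
    · rw [hwneg _ h]; simp
  · -- subsolution
    intro φ hφ x₀ hmax
    simp only [truncLap]
    set a := x₀ (Fin.last (n+1)) with hadef
    have hNE := truncSet_nonempty hkN (hess φ x₀)
    rcases lt_trichotomy a 0 with hlt | heq | hgt
    · -- a < 0 : u = 0 near the line, test function has a local min along every direction
      have hW : u x₀ = 0 := by rw [hu, hwneg _ hlt]
      have hlow : ∀ s ∈ { s : ℝ | ∃ v : Fin k → (Fin (n+2) → ℝ),
          (∀ i j, dotProduct (v i) (v j) = if i = j then (1 : ℝ) else 0) ∧
          s = ∑ i, dotProduct ((hess φ x₀).mulVec (v i)) (v i) }, (0:ℝ) ≤ s := by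
        rintro s ⟨v, hvo, rfl⟩
        apply Finset.sum_nonneg
        intro m _
        set ev : EuclideanSpace ℝ (Fin (n+2)) := WithLp.toLp 2 (v m) with hev
        have hc : |ev (Fin.last (n+1))| ≤ 1 :=
          unit_comp_le (v m) (by simpa using hvo m m) _
        have hline := isLocalMax_line hmax ev
        have heqv := huline0 x₀ ev hlt hc
        have h0 : u (x₀ + (0:ℝ) • ev) = (fun _ : ℝ => (0:ℝ)) 0 := by
          rw [hu, happly]
          simp only [zero_mul, add_zero]
          exact hwneg _ hlt
        have H : IsLocalMax (fun t : ℝ => (fun _ : ℝ => (0:ℝ)) t - φ (x₀ + t • ev)) 0 :=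
          isLocalMax_congr_sub _ _ _ heqv h0 hline
        have := key_max φ hφ x₀ ev (fun _ => 0) (fun _ => 0) 0
          (fun t => hasDerivAt_const t 0) (hasDerivAt_const 0 0) H
        exact this
      have h1 : (0:ℝ) ≤ sInf _ := le_csInf hNE hlow
      rw [hW]
      norm_num
      linarith [h1]
    · -- a = 0 : no test function can touch from above
      exfalso
      set ev : EuclideanSpace ℝ (Fin (n+2)) := EuclideanSpace.single (Fin.last (n+1)) 1 with hev
      have hevl : ev (Fin.last (n+1)) = 1 := by
        rw [hev, EuclideanSpace.single_apply]; simp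
      have hline := isLocalMax_line hmax ev
      set g : ℝ → ℝ := fun t => φ (x₀ + t • ev) with hg
      set α : ℝ := fderiv ℝ φ (x₀ + (0:ℝ) • ev) ev with hα
      have hgd : HasDerivAt g α 0 := phi_line_deriv φ hφ x₀ ev 0
      have hval : ∀ t : ℝ, u (x₀ + t • ev) = w t := by
        intro t
        rw [hu, happly, hevl, mul_one, ← hadef, heq, zero_add]
      have hev' : ∀ᶠ t in nhds (0:ℝ), w t ≤ g t - g 0 := by
        filter_upwards [hline] with t ht
        have ht' : u (x₀ + t • ev) - φ (x₀ + t • ev) ≤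
            u (x₀ + (0:ℝ) • ev) - φ (x₀ + (0:ℝ) • ev) := ht
        rw [hval t, hval 0, hw0] at ht'
        show w t ≤ g t - g 0
        linarith [ht']
      have hslopeg := hasDerivAt_iff_tendsto_slope.mp hgd
      have hmono1 : nhdsWithin (0:ℝ) (Set.Iio 0) ≤ nhdsWithin 0 {0}ᶜ :=
        nhdsWithin_mono _ (fun x hx => ne_of_lt hx)
      have hmono2 : nhdsWithin (0:ℝ) (Set.Ioi 0) ≤ nhdsWithin 0 {0}ᶜ :=
        nhdsWithin_mono _ (fun x hx => ne_of_gt hx)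
      have hα1 : α ≤ 0 := by
        apply le_of_tendsto (hslopeg.mono_left hmono1)
        filter_upwards [eventually_nhdsWithin_of_eventually_nhds hev',
          self_mem_nhdsWithin] with t ht ht'
        have ht'' : t < 0 := ht'
        rw [hwneg t ht''] at ht
        have : slope g 0 t = (g t - g 0) / t := by simp [slope_def_field]
        rw [this]
        exact div_nonpos_of_nonneg_of_nonpos (by linarith) (le_of_lt ht'')
      have hα2 : QQ' 0 ≤ α := by
        have hsq := hasDerivAt_iff_tendsto_slope.mp (QQ_hasDerivAt 0)
        apply le_of_tendsto_of_tendsto (hsq.mono_left hmono2) (hslopeg.mono_left hmono2)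
        filter_upwards [eventually_nhdsWithin_of_eventually_nhds hev',
          self_mem_nhdsWithin] with t ht ht'
        have ht'' : (0:ℝ) < t := ht'
        rw [hwQ t (le_of_lt ht'')] at ht
        have e1 : slope QQ 0 t = QQ t / t := by simp [slope_def_field, QQ_zero]
        have e2 : slope g 0 t = (g t - g 0) / t := by simp [slope_def_field]
        rw [e1, e2]
        gcongr
      have hQ'0 : 0 < QQ' 0 := by
        rw [QQ', QQ_zero]
        positivity
      linarith
    · -- a > 0
      have hQa0 : 0 ≤ QQ a := QQ_nonneg (le_of_lt hgt)
      have hQa1 : QQ a < 1 := (abs_lt.mp (abs_QQ_lt_one a)).2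
      have hEneg : QQ a ^ 3 - QQ a ≤ 0 := by
        nlinarith [mul_nonneg (mul_nonneg hQa0 (by linarith : (0:ℝ) ≤ 1 - QQ a))
          (by linarith : (0:ℝ) ≤ 1 + QQ a)]
      have hW : u x₀ = QQ a := by rw [hu, hwQ _ (le_of_lt hgt)]
      have hlow : ∀ s ∈ { s : ℝ | ∃ v : Fin k → (Fin (n+2) → ℝ),
          (∀ i j, dotProduct (v i) (v j) = if i = j then (1 : ℝ) else 0) ∧
          s = ∑ i, dotProduct ((hess φ x₀).mulVec (v i)) (v i) },
          QQ a ^ 3 - QQ a ≤ s := by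
        rintro s ⟨v, hvo, rfl⟩
        have hterm : ∀ m, (QQ a ^ 3 - QQ a) * (v m (Fin.last (n+1)))^2 ≤
            dotProduct ((hess φ x₀).mulVec (v m)) (v m) := by
          intro m
          have hcc : |(WithLp.toLp 2 (v m)) (Fin.last (n+1))| ≤ 1 :=
            unit_comp_le (v m) (by simpa using hvo m m) _
          have hline := isLocalMax_line hmax (WithLp.toLp 2 (v m))
          have heqv := hulineQ x₀ (WithLp.toLp 2 (v m)) hgt hcc
          have h0 : u (x₀ + (0:ℝ) • (WithLp.toLp 2 (v m)))
              = QQ (a + 0 * v m (Fin.last (n+1))) := by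
            rw [hu, happly]
            simp only [zero_mul, add_zero]
            exact hwQ _ (le_of_lt hgt)
          have H : IsLocalMax (fun t : ℝ => QQ (a + t * v m (Fin.last (n+1)))
              - φ (x₀ + t • (WithLp.toLp 2 (v m)))) 0 :=
            isLocalMax_congr_sub _ _ _ heqv h0 hline
          have hk := key_max φ hφ x₀ (WithLp.toLp 2 (v m))
            (fun t => QQ (a + t * v m (Fin.last (n+1))))
            (fun t => QQ' (a + t * v m (Fin.last (n+1))) * v m (Fin.last (n+1)))
            ((QQ a ^ 3 - QQ a) * v m (Fin.last (n+1)) * v m (Fin.last (n+1)))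
            (fun t => QQline_hasDerivAt a _ t) (QQline'_hasDerivAt a _) H
          calc (QQ a ^ 3 - QQ a) * (v m (Fin.last (n+1)))^2
              = (QQ a ^ 3 - QQ a) * v m (Fin.last (n+1)) * v m (Fin.last (n+1)) := by ring
            _ ≤ _ := hk
        have h1 : ∑ m, (QQ a ^ 3 - QQ a) * (v m (Fin.last (n+1)))^2 ≤
            ∑ m, dotProduct ((hess φ x₀).mulVec (v m)) (v m) :=
          Finset.sum_le_sum fun m _ => hterm m
        have h2 : QQ a ^ 3 - QQ a ≤ ∑ m, (QQ a ^ 3 - QQ a) * (v m (Fin.last (n+1)))^2 := by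
          rw [← Finset.mul_sum]
          have hb := bessel v (Fin.last (n+1)) hvo
          nlinarith [hb, hEneg]
        linarith
      have h1 : QQ a ^ 3 - QQ a ≤ sInf _ := le_csInf hNE hlow
      rw [hW]
      linarith [h1]
  · -- supersolution
    intro φ hφ x₀ hmin
    simp only [truncLap]
    set a := x₀ (Fin.last (n+1)) with hadef
    have hBB := truncSet_bddBelow (k := k) (hess φ x₀)
    rcases le_or_gt a 0 with hle | hgt
    · -- a ≤ 0
      have hW : u x₀ = 0 := by
        rw [hu, ← hadef]
        rcases lt_or_eq_of_le hle with h | h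
        · exact hwneg _ h
        · rw [h, hw0]
      have hσinj : Function.Injective (fun i : Fin k => Fin.castLE hkN i) :=
        fun i j hij => Fin.castLE_injective hkN hij
      have horth := orth_single (σ := fun i : Fin k => Fin.castLE hkN i) hσinj
      have hver : ∀ i : Fin k, dotProduct
          ((hess φ x₀).mulVec (Pi.single (Fin.castLE hkN i) 1)) (Pi.single (Fin.castLE hkN i) 1)
          ≤ 0 := by
        intro i
        have hblast : (Fin.last (n+1) : Fin (n+2)) ≠ (Fin.castLE hkN i : Fin (n+2)) := by
          intro hcon
          have h1 := congrArg Fin.val hcon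
          simp only [Fin.val_last, Fin.coe_castLE] at h1
          have := i.isLt
          omega
        have hconst : ∀ t : ℝ,
            u (x₀ + t • (EuclideanSpace.single (Fin.castLE hkN i) (1:ℝ))) = u x₀ := by
          intro t
          rw [hu, hu, happly]
          rw [EuclideanSpace.single_apply, if_neg hblast]
          simp
        have hline := isLocalMin_line hmin (EuclideanSpace.single (Fin.castLE hkN i) 1)
        have H : IsLocalMin (fun t : ℝ => (fun _ : ℝ => u x₀) t
            - φ (x₀ + t • EuclideanSpace.single (Fin.castLE hkN i) 1)) 0 :=
          isLocalMin_congr_sub _ _ _ (Filter.Eventually.of_forall hconst) (hconst 0) hline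
        have hk' := key_min φ hφ x₀ (EuclideanSpace.single (Fin.castLE hkN i) 1)
          (fun _ => u x₀) (fun _ => 0) 0 (fun t => hasDerivAt_const t _)
          (hasDerivAt_const 0 0) H
        rw [euclid_single_fun] at hk'
        exact hk'
      have hmem : (∑ i, dotProduct
          ((hess φ x₀).mulVec (Pi.single (Fin.castLE hkN i) (1:ℝ)))
          (Pi.single (Fin.castLE hkN i) 1)) ∈ { s : ℝ | ∃ v : Fin k → (Fin (n+2) → ℝ),
          (∀ i j, dotProduct (v i) (v j) = if i = j then (1 : ℝ) else 0) ∧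
          s = ∑ i, dotProduct ((hess φ x₀).mulVec (v i)) (v i) } :=
        ⟨fun i => Pi.single (Fin.castLE hkN i) 1, horth, rfl⟩
      have h1 := csInf_le hBB hmem
      have hsum : (∑ i, dotProduct
          ((hess φ x₀).mulVec (Pi.single (Fin.castLE hkN i) (1:ℝ)))
          (Pi.single (Fin.castLE hkN i) 1)) ≤ 0 :=
        Finset.sum_nonpos fun i _ => hver i
      rw [hW]
      norm_num
      linarith
    · -- a > 0
      have hQa0 : 0 ≤ QQ a := QQ_nonneg (le_of_lt hgt)
      have hQa1 : QQ a < 1 := (abs_lt.mp (abs_QQ_lt_one a)).2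
      have hEneg : QQ a ^ 3 - QQ a ≤ 0 := by
        nlinarith [mul_nonneg (mul_nonneg hQa0 (by linarith : (0:ℝ) ≤ 1 - QQ a))
          (by linarith : (0:ℝ) ≤ 1 + QQ a)]
      have hW : u x₀ = QQ a := by rw [hu, ← hadef, hwQ _ (le_of_lt hgt)]
      set σ : Fin k → Fin (n+2) :=
        fun i => if (i:ℕ)+1 = k then Fin.last (n+1) else Fin.castLE hkN i with hσ
      have hσval : ∀ i : Fin k, ((i:ℕ)+1 = k → σ i = Fin.last (n+1)) ∧
          ((i:ℕ)+1 ≠ k → σ i = Fin.castLE hkN i) := by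
        intro i
        constructor <;> intro h <;> simp [hσ, h]
      have hσinj : Function.Injective σ := by
        intro i j hij
        by_cases hi : (i:ℕ)+1 = k <;> by_cases hj : (j:ℕ)+1 = k
        · exact Fin.ext (by omega)
        · exfalso
          rw [(hσval i).1 hi, (hσval j).2 hj] at hij
          have h1 := congrArg Fin.val hij
          simp only [Fin.val_last, Fin.coe_castLE] at h1
          have := j.isLt
          omega
        · exfalso
          rw [(hσval i).2 hi, (hσval j).1 hj] at hij
          have h1 := congrArg Fin.val hij
          simp only [Fin.val_last, Fin.coe_castLE] at h1
          have := i.isLt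
          omega
        · rw [(hσval i).2 hi, (hσval j).2 hj] at hij
          exact Fin.castLE_injective hkN hij
      have horth := orth_single (σ := σ) hσinj
      set i₀ : Fin k := ⟨k-1, by omega⟩ with hi₀
      have hi₀iff : ∀ i : Fin k, (i:ℕ)+1 = k ↔ i = i₀ := by
        intro i
        constructor
        · intro h; apply Fin.ext; simp [hi₀]; omega
        · intro h; rw [h, hi₀]; simp; omega
      have hver : ∀ i : Fin k, dotProduct
          ((hess φ x₀).mulVec (Pi.single (σ i) 1)) (Pi.single (σ i) 1)
          ≤ (if i = i₀ then QQ a ^ 3 - QQ a else 0) := by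
        intro i
        set c : ℝ := (EuclideanSpace.single (σ i) (1:ℝ)) (Fin.last (n+1)) with hcdef
        have hcval : c = if Fin.last (n+1) = σ i then 1 else 0 := by
          rw [hcdef, EuclideanSpace.single_apply]
        have hcabs : |(EuclideanSpace.single (σ i) (1:ℝ)) (Fin.last (n+1))| ≤ 1 := by
          rw [← hcdef, hcval]
          split <;> norm_num
        have hline := isLocalMin_line hmin (EuclideanSpace.single (σ i) 1)
        have heqv := hulineQ x₀ (EuclideanSpace.single (σ i) 1) hgt hcabs
        have h0 : u (x₀ + (0:ℝ) • (EuclideanSpace.single (σ i) (1:ℝ)))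
            = QQ (a + 0 * c) := by
          rw [hu, happly]
          simp only [zero_mul, add_zero]
          exact hwQ _ (le_of_lt hgt)
        have H : IsLocalMin (fun t : ℝ => QQ (a + t * c)
            - φ (x₀ + t • (EuclideanSpace.single (σ i) (1:ℝ)))) 0 :=
          isLocalMin_congr_sub _ _ _ heqv h0 hline
        have hk' := key_min φ hφ x₀ (EuclideanSpace.single (σ i) 1)
          (fun t => QQ (a + t * c)) (fun t => QQ' (a + t * c) * c)
          ((QQ a ^ 3 - QQ a) * c * c)
          (fun t => QQline_hasDerivAt a c t) (QQline'_hasDerivAt a c) H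
        rw [euclid_single_fun] at hk'
        have hcases : (QQ a ^ 3 - QQ a) * c * c = (if i = i₀ then QQ a ^ 3 - QQ a else 0) := by
          by_cases h : i = i₀
          · have hik : (i:ℕ)+1 = k := (hi₀iff i).mpr h
            have : σ i = Fin.last (n+1) := (hσval i).1 hik
            rw [hcval, this, if_pos rfl, if_pos h]
            ring
          · have hik : (i:ℕ)+1 ≠ k := fun hc => h ((hi₀iff i).mp hc)
            have hσi : σ i = Fin.castLE hkN i := (hσval i).2 hik
            have hne : Fin.last (n+1) ≠ σ i := by
              rw [hσi]
              intro hcon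
              have h1 := congrArg Fin.val hcon
              simp only [Fin.val_last, Fin.coe_castLE] at h1
              have := i.isLt
              omega
            rw [hcval, if_neg hne, if_neg h]
            ring
        rw [hcases] at hk'
        exact hk'
      have hmem : (∑ i, dotProduct
          ((hess φ x₀).mulVec (Pi.single (σ i) (1:ℝ))) (Pi.single (σ i) 1))
          ∈ { s : ℝ | ∃ v : Fin k → (Fin (n+2) → ℝ),
          (∀ i j, dotProduct (v i) (v j) = if i = j then (1 : ℝ) else 0) ∧
          s = ∑ i, dotProduct ((hess φ x₀).mulVec (v i)) (v i) } :=
        ⟨fun i => Pi.single (σ i) 1, horth, rfl⟩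
      have h1 := csInf_le hBB hmem
      have hsum : (∑ i, dotProduct
          ((hess φ x₀).mulVec (Pi.single (σ i) (1:ℝ))) (Pi.single (σ i) 1))
          ≤ QQ a ^ 3 - QQ a := by
        calc (∑ i, dotProduct
            ((hess φ x₀).mulVec (Pi.single (σ i) (1:ℝ))) (Pi.single (σ i) 1))
            ≤ ∑ i, (if i = i₀ then QQ a ^ 3 - QQ a else 0) :=
              Finset.sum_le_sum fun i _ => hver i
          _ = QQ a ^ 3 - QQ a := by
              rw [Finset.sum_ite_eq' Finset.univ i₀ (fun _ => QQ a ^ 3 - QQ a)]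
              simp
      rw [hW]
      linarith
  · -- atBot
    have hE : (fun _ : ℝ => (0:ℝ)) =ᶠ[Filter.atBot] w := by
      filter_upwards [Filter.eventually_lt_atBot 0] with t ht
      exact (hwneg t ht).symm
    exact Filter.Tendsto.congr' hE tendsto_const_nhds
  · -- atTop
    have hQt : Filter.Tendsto QQ Filter.atTop (nhds 1) := by
      apply tanh_tendsto_one.comp
      apply Filter.Tendsto.atTop_div_const (by positivity : (0:ℝ) < Real.sqrt 2)
      exact Filter.tendsto_id
    have hE : QQ =ᶠ[Filter.atTop] w := by
      filter_upwards [Filter.eventually_ge_atTop 0] with t ht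
      exact (hwQ t ht).symm
    exact hQt.congr' hE
end

section
/- Let N ≥ 2 and 1 ≤ k ≤ N−1. There is no lower semicontinuous one-dimensional function u : ℝ^N → ℝ (i.e. u(x) = v(x_N) for some v : ℝ → ℝ) with 0 < u(x) < 1 for all x ∈ ℝ^N that is a viscosity supersolution of P⁻_k(D²u) + u − u³ = 0 in ℝ^N. -/
theorem myTruncLap_zero {N : ℕ} (k : ℕ) (hk : k ≤ N) :
    truncLap k (0 : Matrix (Fin N) (Fin N) ℝ) = 0 := by
  have hset : { s : ℝ | ∃ v : Fin k → (Fin N → ℝ),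
      (∀ i j, dotProduct (v i) (v j) = if i = j then (1 : ℝ) else 0) ∧
      s = ∑ i, dotProduct ((0 : Matrix (Fin N) (Fin N) ℝ).mulVec (v i)) (v i) }
      = {(0 : ℝ)} := by
    ext s
    simp only [Set.mem_setOf_eq, Set.mem_singleton_iff]
    constructor
    · rintro ⟨v, -, rfl⟩
      simp [Matrix.zero_mulVec, zero_dotProduct]
    · rintro rfl
      refine ⟨fun i => Pi.single (Fin.castLE hk i) 1, fun i j => ?_, by
        simp [Matrix.zero_mulVec, zero_dotProduct]⟩
      simp only [dotProduct, Pi.single_apply]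
      rw [Finset.sum_eq_single (Fin.castLE hk i)]
      · simp [Fin.castLE_inj, eq_comm]
      · intro b _ hb; simp [hb]
      · exact fun h => absurd (Finset.mem_univ _) h
  unfold truncLap
  rw [hset]
  exact csInf_singleton 0

theorem myHess_affine {N : ℕ} (α β : ℝ) (i : Fin N) (x : EuclideanSpace ℝ (Fin N)) :
    hess (fun y => (β • (EuclideanSpace.proj i : EuclideanSpace ℝ (Fin N) →L[ℝ] ℝ)) y + α) x
      = 0 := by
  have hd : (fderiv ℝ (fun y =>
        (β • (EuclideanSpace.proj i : EuclideanSpace ℝ (Fin N) →L[ℝ] ℝ)) y + α))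
      = fun _ => (β • (EuclideanSpace.proj i : EuclideanSpace ℝ (Fin N) →L[ℝ] ℝ)) := by
    funext y
    rw [fderiv_add_const, ContinuousLinearMap.fderiv]
  funext a b
  show iteratedFDeriv ℝ 2 _ x _ = 0
  rw [iteratedFDeriv_two_apply, hd]
  simp

/-- LSC real function attains its min on a compact interval. -/
theorem myLSC_min (g : ℝ → ℝ) (hg : LowerSemicontinuous g) {a b : ℝ} (hab : a ≤ b) :
    ∃ t ∈ Set.Icc a b, ∀ s ∈ Set.Icc a b, g t ≤ g s := by
  by_contra h
  push_neg at h
  choose! s hs1 hs2 using h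
  have hU : ∀ x ∈ Set.Icc a b, {z | g (s x) < g z} ∈ nhds x := fun x hx =>
    hg x (g (s x)) (hs2 x hx)
  obtain ⟨F, hF, hcov⟩ := isCompact_Icc.elim_nhds_subcover _ hU
  have hne : F.Nonempty := by
    by_contra hFe
    rw [Finset.not_nonempty_iff_eq_empty] at hFe
    have := hcov (Set.left_mem_Icc.2 hab)
    simp [hFe] at this
  obtain ⟨t₀, ht₀F, ht₀⟩ := F.exists_min_image (fun t => g (s t)) hne
  have hst₀ : s t₀ ∈ Set.Icc a b := hs1 t₀ (hF t₀ ht₀F)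
  have := hcov hst₀
  simp only [Set.mem_iUnion] at this
  obtain ⟨t, htF, hlt⟩ := this
  exact absurd (ht₀ t htF) (not_le.2 hlt)

/-- Kill lemma: a supersolution as in stmt5 admits no point where `v` minus an affine
function has a local minimum. -/
theorem myKill {n : ℕ} (k : ℕ) (hk2 : k ≤ n + 1)
    (u : EuclideanSpace ℝ (Fin (n + 2)) → ℝ) (v : ℝ → ℝ)
    (huv : ∀ x, u x = v (x (Fin.last (n + 1))))
    (hb : ∀ x, 0 < u x ∧ u x < 1)
    (hsuper : IsViscSupersol k (fun s => s - s ^ 3) u)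
    (α β t₀ : ℝ) (hmin : IsLocalMin (fun t => v t - (β * t + α)) t₀) : False := by
  set L : EuclideanSpace ℝ (Fin (n + 2)) →L[ℝ] ℝ :=
    β • (EuclideanSpace.proj (Fin.last (n + 1))) with hL
  set φ : EuclideanSpace ℝ (Fin (n + 2)) → ℝ := fun y => L y + α with hφdef
  have hφ : ContDiff ℝ 2 φ := (L.contDiff).add contDiff_const
  set x₀ : EuclideanSpace ℝ (Fin (n + 2)) :=
    t₀ • EuclideanSpace.single (Fin.last (n + 1)) (1 : ℝ) with hx₀def
  have hx₀ : x₀ (Fin.last (n + 1)) = t₀ := by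
    simp [hx₀def, EuclideanSpace.single_apply]
  have hT : Filter.Tendsto (fun x : EuclideanSpace ℝ (Fin (n + 2)) => x (Fin.last (n + 1)))
      (nhds x₀) (nhds t₀) := by
    have := (EuclideanSpace.proj (Fin.last (n + 1)) :
      EuclideanSpace ℝ (Fin (n + 2)) →L[ℝ] ℝ).continuous.tendsto x₀
    simpa [PiLp.proj_apply, hx₀] using this
  have hlocal : IsLocalMin (fun x => u x - φ x) x₀ := by
    refine (hT.eventually hmin).mono fun x hx => ?_
    simpa [huv, hφdef, hL, ContinuousLinearMap.smul_apply, PiLp.proj_apply,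
      smul_eq_mul, hx₀] using hx
  have hs := hsuper φ hφ x₀ hlocal
  have hhess : hess φ x₀ = 0 := myHess_affine α β _ x₀
  rw [hhess, myTruncLap_zero k (hk2.trans (Nat.le_succ _))] at hs
  obtain ⟨h0, h1⟩ := hb x₀
  have hs' : u x₀ - u x₀ ^ 3 ≤ 0 := by simpa using hs
  have hpos : 0 < u x₀ * ((1 - u x₀) * (1 + u x₀)) :=
    mul_pos h0 (mul_pos (by linarith) (by linarith))
  nlinarith [hs', hpos]

/-- there is no LSC one-dimensional viscosity supersolution `u` of
`P⁻ₖ(D²u) + u - u³ = 0` in `ℝ^N` with `0 < u < 1` everywhere. -/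
theorem stmt5 {n : ℕ} (k : ℕ) (hk1 : 1 ≤ k) (hk2 : k ≤ n + 1) :
    ¬ ∃ (u : EuclideanSpace ℝ (Fin (n + 2)) → ℝ) (v : ℝ → ℝ),
      LowerSemicontinuous u ∧
      (∀ x, u x = v (x (Fin.last (n + 1)))) ∧
      (∀ x, 0 < u x ∧ u x < 1) ∧
      IsViscSupersol k (fun s => s - s ^ 3) u := by
  rintro ⟨u, v, hlsc, huv, hb, hsuper⟩
  -- values of v
  set e : ℝ → EuclideanSpace ℝ (Fin (n + 2)) :=
    fun t => t • EuclideanSpace.single (Fin.last (n + 1)) (1 : ℝ) with hedef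
  have hecont : Continuous e := continuous_id.smul continuous_const
  have hue : ∀ t, u (e t) = v t := by
    intro t
    rw [huv]
    congr 1
    simp [hedef, EuclideanSpace.single_apply]
  have hv : ∀ t, 0 < v t ∧ v t < 1 := by
    intro t
    have := hb (e t)
    rwa [hue] at this
  have hvlsc : LowerSemicontinuous v := by
    intro t y hy
    have hy' : y < u (e t) := by rwa [hue]
    exact ((hecont.tendsto t).eventually (hlsc (e t) y hy')).mono fun s hs => by
      beta_reduce at hs ⊢
      rwa [hue] at hs
  by_cases hA : ∃ a b t, a < t ∧ t < b ∧ (b - a) * v t < (b - t) * v a + (t - a) * v b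
  · obtain ⟨a, b, tm, h1, h2, h3⟩ := hA
    have hab : a < b := h1.trans h2
    set β : ℝ := (v b - v a) / (b - a) with hβ
    set α : ℝ := v a - β * a with hα
    set g : ℝ → ℝ := fun t => v t - (β * t + α) with hg
    have hb' : β * (b - a) = v b - v a := by
      rw [hβ]; exact div_mul_cancel₀ _ (sub_ne_zero.2 hab.ne')
    have hga : g a = 0 := by simp [hg, hα]
    have hgb : g b = 0 := by
      simp only [hg, hα]; linear_combination -hb'
    have hgt : g tm < 0 := by
      have hexp : (b - a) * (β * tm + α) = (b - tm) * v a + (tm - a) * v b := by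
        simp only [hα]; linear_combination (tm - a) * hb'
      have h4 : (b - a) * v tm < (b - a) * (β * tm + α) := by rw [hexp]; exact h3
      have h5 : v tm < β * tm + α := lt_of_mul_lt_mul_left h4 (sub_pos.2 hab).le
      simp only [hg]; linarith
    have hglsc : LowerSemicontinuous g := by
      have hc : Continuous fun t : ℝ => -(β * t + α) := by continuity
      exact hvlsc.add hc.lowerSemicontinuous
    obtain ⟨t₀, ht₀mem, ht₀min⟩ := myLSC_min g hglsc hab.le
    have hneg : g t₀ < 0 := lt_of_le_of_lt (ht₀min tm ⟨h1.le, h2.le⟩) hgt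
    have hta : a < t₀ := lt_of_le_of_ne ht₀mem.1 (by rintro rfl; rw [hga] at hneg; linarith)
    have htb : t₀ < b := lt_of_le_of_ne ht₀mem.2 (by rintro rfl; rw [hgb] at hneg; linarith)
    have hlocal : IsLocalMin g t₀ :=
      Filter.eventually_of_mem (Icc_mem_nhds hta htb) fun s hs => ht₀min s hs
    exact myKill k hk2 u v huv hb hsuper α β t₀ hlocal
  · push_neg at hA
    -- v is midpoint-concave in the chord sense, hence constant
    have hconst : ∀ x y, x < y → v x = v y := by
      intro x y hxy
      rcases lt_trichotomy (v x) (v y) with h | h | h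
      · exfalso
        set d : ℝ := v y - v x with hd
        have hdpos : 0 < d := sub_pos.2 h
        set s : ℝ := x - (y - x) * v x / d - 1 with hs
        have hsx : s < x := by
          have : 0 < (y - x) * v x / d :=
            div_pos (mul_pos (sub_pos.2 hxy) (hv x).1) hdpos
          simp only [hs]; linarith
        have key := hA s y x hsx hxy
        have hxs : (x - s) * d = (y - x) * v x + d := by
          have : x - s = (y - x) * v x / d + 1 := by simp [hs]; ring
          rw [this]; field_simp
        nlinarith [key, hxs, (hv s).1, mul_pos (sub_pos.2 hxy) (hv s).1]
      · exact h
      · exfalso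
        set d : ℝ := v x - v y with hd
        have hdpos : 0 < d := sub_pos.2 h
        set t : ℝ := y + (y - x) * v y / d + 1 with ht
        have hyt : y < t := by
          have : 0 < (y - x) * v y / d :=
            div_pos (mul_pos (sub_pos.2 hxy) (hv y).1) hdpos
          simp only [ht]; linarith
        have key := hA x t y hxy hyt
        have hty : (t - y) * d = (y - x) * v y + d := by
          have : t - y = (y - x) * v y / d + 1 := by simp [ht]; ring
          rw [this]; field_simp
        nlinarith [key, hty, (hv t).1, mul_pos (sub_pos.2 hxy) (hv t).1]
    have hvc : ∀ t, v t = v 0 := by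
      intro t
      rcases lt_trichotomy t 0 with h | h | h
      · exact hconst t 0 h
      · rw [h]
      · exact (hconst 0 t h).symm
    have hlocal : IsLocalMin (fun t => v t - (0 * t + v 0)) 0 :=
      Filter.Eventually.of_forall fun s => by simp [hvc s, hvc 0]
    exact myKill k hk2 u v huv hb hsuper (v 0) 0 0 hlocal
end

section
/- Let v : ℝ → ℝ be lower semicontinuous and suppose that v satisfies v'' < 0 in the viscosity sense, i.e. for every t₀ ∈ ℝ and every C² function φ : ℝ → ℝ such that v − φ attains a local minimum at t₀, one has φ''(t₀) < 0. Then v is strictly concave: for all t₁ < t₂ and every t ∈ (t₁, t₂), v(t) > v(t₁) + ((v(t₂) − v(t₁))/(t₂ − t₁))·(t − t₁). In particular, there is no such v that is in addition positive on all of ℝ. -/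
/-- A lower semicontinuous real function attains its minimum on a nonempty compact set. -/
lemma lsc_exists_min {g : ℝ → ℝ} (hg : LowerSemicontinuous g) {K : Set ℝ}
    (hK : IsCompact K) (hne : K.Nonempty) : ∃ x ∈ K, ∀ y ∈ K, g x ≤ g y := by
  by_contra hcon
  push_neg at hcon
  have hcov : K ⊆ ⋃ y ∈ K, g ⁻¹' Set.Ioi (g y) := by
    intro x hx
    obtain ⟨y, hy, hlt⟩ := hcon x hx
    exact Set.mem_biUnion hy hlt
  obtain ⟨t, htK, htfin, htcov⟩ :=
    hK.elim_finite_subcover_image (fun y _ => hg.isOpen_preimage (g y)) hcov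
  obtain ⟨x0, hx0⟩ := hne
  have hx0' := htcov hx0
  simp only [Set.mem_iUnion, Set.mem_preimage, Set.mem_Ioi, exists_prop] at hx0'
  obtain ⟨y0, hy0t, _⟩ := hx0'
  obtain ⟨ym, hymt, hymin⟩ := Set.exists_min_image t g htfin ⟨y0, hy0t⟩
  have hymK : ym ∈ K := htK hymt
  have := htcov hymK
  simp only [Set.mem_iUnion, Set.mem_preimage, Set.mem_Ioi, exists_prop] at this
  obtain ⟨z, hzt, hlt⟩ := this
  exact absurd (hymin z hzt) (not_le.mpr hlt)

lemma quad_hasDerivAt (ε B C x : ℝ) :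
    HasDerivAt (fun x : ℝ => ε*x^2 + B*x + C) (2*ε*x + B) x := by
  have h1 : HasDerivAt (fun x : ℝ => ε*x^2) (ε*(2*x^1)) x := (hasDerivAt_pow 2 x).const_mul ε
  have h2 : HasDerivAt (fun x : ℝ => B*x) B x := by
    simpa using (hasDerivAt_id x).const_mul B
  have := (h1.add h2).add_const C
  refine this.congr_deriv ?_
  ring

lemma quad_deriv2 (ε B C : ℝ) :
    deriv (deriv (fun x : ℝ => ε*x^2 + B*x + C)) = fun _ => 2*ε := by
  have h1 : deriv (fun x : ℝ => ε*x^2 + B*x + C) = fun x => 2*ε*x + B := by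
    funext x
    exact (quad_hasDerivAt ε B C x).deriv
  rw [h1]
  funext x
  have h2 : HasDerivAt (fun x : ℝ => 2*ε*x + B) (2*ε) x := by
    simpa using ((hasDerivAt_id x).const_mul (2*ε)).add_const B
  exact h2.deriv

lemma quad_contDiff (ε B C : ℝ) : ContDiff ℝ 2 (fun x : ℝ => ε*x^2 + B*x + C) := by
  exact ((contDiff_const.mul (contDiff_id.pow 2)).add
    (contDiff_const.mul contDiff_id)).add contDiff_const

/-- a lower semicontinuous `v : ℝ → ℝ` satisfying `v'' < 0` in the viscosity
sense is strictly concave (it lies strictly above its chords), and in particular no such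
`v` can be positive on all of `ℝ`. -/
theorem stmt6 (v : ℝ → ℝ) (hlsc : LowerSemicontinuous v)
    (hvisc : ∀ (t₀ : ℝ) (φ : ℝ → ℝ), ContDiff ℝ 2 φ →
      IsLocalMin (fun t => v t - φ t) t₀ → deriv (deriv φ) t₀ < 0) :
    (∀ t₁ t₂ t : ℝ, t₁ < t → t < t₂ →
      v t₁ + (v t₂ - v t₁) / (t₂ - t₁) * (t - t₁) < v t) ∧
    ¬ (∀ t : ℝ, 0 < v t) := by
  have key : ∀ a b t : ℝ, a < t → t < b →
      v a + (v b - v a) / (b - a) * (t - a) < v t := by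
    intro a b t hat htb
    have hab : a < b := hat.trans htb
    have hba : (0:ℝ) < b - a := by linarith
    set m : ℝ := (v b - v a) / (b - a) with hm
    set c : ℝ := v a - m * a with hc
    set L : ℝ → ℝ := fun x => m * x + c with hL
    have hmb : m * (b - a) = v b - v a := by
      rw [hm, div_mul_cancel₀ _ (ne_of_gt hba)]
    have hLa : L a = v a := by simp only [hL, hc]; ring
    have hLb : L b = v b := by
      simp only [hL, hc]
      nlinarith [hmb]
    clear_value m c L
    -- Step A: L ≤ v on [a, b]
    have stepA : ∀ s ∈ Set.Icc a b, L s ≤ v s := by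
      by_contra hcon
      push_neg at hcon
      obtain ⟨s, hsI, hs⟩ := hcon
      have hsa : a < s := by
        rcases lt_or_eq_of_le hsI.1 with h | h
        · exact h
        · exfalso; rw [← h, hLa] at hs; exact lt_irrefl _ hs
      have hsb : s < b := by
        rcases lt_or_eq_of_le hsI.2 with h | h
        · exact h
        · exfalso; rw [h, hLb] at hs; exact lt_irrefl _ hs
      have hδpos : (0:ℝ) < L s - v s := by linarith
      obtain ⟨ε, hεpos, hval⟩ :
          ∃ ε : ℝ, 0 < ε ∧ ε * (s - a) * (b - s) = (L s - v s) / 2 := by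
        have hp : (0:ℝ) < s - a := by linarith
        have hq : (0:ℝ) < b - s := by linarith
        refine ⟨(L s - v s) / (2 * (s - a) * (b - s)), ?_, ?_⟩
        · exact div_pos hδpos (by positivity)
        · generalize (L s - v s) = D
          field_simp
      set ψ : ℝ → ℝ := fun x => ε*x^2 + (m - ε*(a+b))*x + (c + ε*a*b) with hψdef
      have hψ : ∀ x, ψ x = L x + ε*(x-a)*(x-b) := by
        intro x; simp only [hψdef, hL]; ring
      set g : ℝ → ℝ := fun x => v x - ψ x with hg
      have hψcont : Continuous ψ := by
        simp only [hψdef]; continuity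
      have hglsc : LowerSemicontinuous g := by
        have h1 : LowerSemicontinuous (fun x => -ψ x) := (hψcont.neg).lowerSemicontinuous
        have h2 := hlsc.add h1
        simpa [hg, sub_eq_add_neg] using h2
      obtain ⟨x₀, hx₀I, hx₀min⟩ := lsc_exists_min hglsc isCompact_Icc
        (Set.nonempty_Icc.mpr hab.le)
      have hga : g a = 0 := by
        have : g a = v a - (L a + ε*(a-a)*(a-b)) := by simp only [hg]; rw [hψ a]
        rw [this, hLa]; ring
      have hgb : g b = 0 := by
        have : g b = v b - (L b + ε*(b-a)*(b-b)) := by simp only [hg]; rw [hψ b]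
        rw [this, hLb]; ring
      have hgs : g s < 0 := by
        have h1 : g s = v s - L s - ε*(s-a)*(s-b) := by
          simp only [hg]; rw [hψ s]; ring
        have h2 : ε*(s-a)*(s-b) = -((L s - v s)/2) := by
          have : ε*(s-a)*(s-b) = -(ε*(s-a)*(b-s)) := by ring
          rw [this, hval]
        rw [h1, h2]
        linarith
      have hx₀neg : g x₀ < 0 := lt_of_le_of_lt (hx₀min s ⟨hsa.le, hsb.le⟩) hgs
      have hx₀a : a < x₀ := by
        rcases lt_or_eq_of_le hx₀I.1 with h | h
        · exact h
        · exfalso; rw [← h, hga] at hx₀neg; exact lt_irrefl _ hx₀neg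
      have hx₀b : x₀ < b := by
        rcases lt_or_eq_of_le hx₀I.2 with h | h
        · exact h
        · exfalso; rw [h, hgb] at hx₀neg; exact lt_irrefl _ hx₀neg
      have hloc : IsLocalMin (fun x => v x - ψ x) x₀ := by
        have hmem : Set.Ioo a b ∈ nhds x₀ := Ioo_mem_nhds hx₀a hx₀b
        exact Filter.eventually_of_mem hmem
          (fun y hy => hx₀min y (Set.Ioo_subset_Icc_self hy))
      have hlt := hvisc x₀ ψ (by rw [hψdef]; exact quad_contDiff ε (m - ε*(a+b)) (c + ε*a*b)) hloc
      rw [hψdef, quad_deriv2] at hlt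
      simp only at hlt
      linarith
    -- Step B: strictness
    by_contra hle
    push_neg at hle
    rw [hm] at hle
    have hLt : L t = v a + (v b - v a) / (b - a) * (t - a) := by
      simp only [hL, hc, hm]; ring
    have heq : v t = L t := by
      have h1 := stepA t ⟨hat.le, htb.le⟩
      rw [hLt]; linarith
    have hloc : IsLocalMin (fun x => v x - L x) t := by
      have hmem : Set.Ioo a b ∈ nhds t := Ioo_mem_nhds hat htb
      apply Filter.eventually_of_mem hmem
      intro y hy
      have := stepA y (Set.Ioo_subset_Icc_self hy)
      show v t - L t ≤ v y - L y
      rw [heq]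
      linarith
    have hLquad : L = fun x : ℝ => (0:ℝ)*x^2 + m*x + c := by
      funext x; simp only [hL]; ring
    have hlt := hvisc t L (by rw [hLquad]; exact quad_contDiff 0 m c) hloc
    rw [hLquad, quad_deriv2] at hlt
    norm_num at hlt
  refine ⟨fun t₁ t₂ t h1 h2 => key t₁ t₂ t h1 h2, ?_⟩
  intro hpos
  -- v b < v a with a < b leads to contradiction (extrapolate right)
  have R : ∀ a b : ℝ, a < b → v b < v a → False := by
    intro a b hab hvba
    set k : ℝ := (v b - v a) / (b - a) with hk
    have hbapos : (0:ℝ) < b - a := by linarith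
    have hkneg : k < 0 := div_neg_of_neg_of_pos (by linarith) hbapos
    set s : ℝ := max (b + 1) (a - v a / k) with hs
    have hsb : b < s := lt_of_lt_of_le (by linarith) (le_max_left _ _)
    have hkey := key a s b hab hsb
    have hsa : (0:ℝ) < s - a := by linarith [hab.trans hsb]
    have hk' : k * (b - a) = v b - v a := by
      rw [hk, div_mul_cancel₀ _ (ne_of_gt hbapos)]
    have h1 : (v s - v a) / (s - a) * (b - a) < k * (b - a) := by
      linarith [hkey, hk']
    have h2 : (v s - v a) / (s - a) < k :=
      lt_of_mul_lt_mul_right h1 (by linarith : (0:ℝ) ≤ b - a)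
    have h3 : v s - v a < k * (s - a) := by
      have := (div_lt_iff₀ hsa).mp h2
      linarith
    have h4 : k * (s - a) ≤ -v a := by
      have hle : -v a / k ≤ s - a := by
        have h0 : a - v a / k ≤ s := le_max_right _ _
        have hrw : -v a / k = -(v a / k) := by ring
        linarith
      have h5 : k * (s - a) ≤ k * (-v a / k) :=
        mul_le_mul_of_nonpos_left hle hkneg.le
      have h6 : k * (-v a / k) = -v a := by
        rw [mul_comm, div_mul_cancel₀ _ (ne_of_lt hkneg)]
      linarith
    have := hpos s
    linarith
  -- v a < v b with a < b leads to contradiction (extrapolate left)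
  have Lf : ∀ a b : ℝ, a < b → v a < v b → False := by
    intro a b hab hvab
    have hvba : (0:ℝ) < v b - v a := by linarith
    set s : ℝ := min (a - 1) ((v b * a - v a * b) / (v b - v a)) with hs
    have hsa : s < a := lt_of_le_of_lt (min_le_left _ _) (by linarith)
    have hkey := key s b a hsa hab
    have hbs : (0:ℝ) < b - s := by linarith
    have hmul : v s * (b - s) + (v b - v s) * (a - s) < v a * (b - s) := by
      have h := mul_lt_mul_of_pos_right hkey hbs
      have hrw : (v b - v s) / (b - s) * (a - s) * (b - s) = (v b - v s) * (a - s) := by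
        rw [div_mul_eq_mul_div, div_mul_eq_mul_div, mul_div_assoc,
          div_self (ne_of_gt hbs), mul_one]
      nlinarith [h, hrw]
    have hle : s ≤ (v b * a - v a * b) / (v b - v a) := min_le_right _ _
    have h7 : s * (v b - v a) ≤ v b * a - v a * b := (le_div_iff₀ hvba).mp hle
    have := hpos s
    nlinarith [hmul, h7, hbs]
  have h2 := key 0 1 (1/2) (by norm_num) (by norm_num)
  rcases lt_trichotomy (v 0) (v 1) with h | h | h
  · exact Lf 0 1 one_pos h
  · have hmid : v 0 < v (1/2) := by
      rw [← h] at h2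
      norm_num at h2
      linarith
    exact Lf 0 (1/2) (by norm_num) hmid
  · exact R 0 1 one_pos h
end

section
/- Let N ≥ 2 and 1 ≤ k ≤ N−1. Let u : ℝ^N → ℝ be lower semicontinuous, one-dimensional (u(x) = v(x_N) for some v : ℝ → ℝ), with 0 ≤ u(x) and |u(x)| < 1 for all x, nondecreasing in the x_N-direction (v is nondecreasing), and a viscosity supersolution of P⁻_k(D²u) + u − u³ = 0 in ℝ^N. Then there exists t₀ ∈ ℝ such that u = 0 on the half-space X₀ = {x ∈ ℝ^N : x_N ≤ t₀}, i.e. v(t) = 0 for all t ≤ t₀. -/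
/-! Auxiliary lemmas -/

noncomputable def Lproj (N : ℕ) : EuclideanSpace ℝ (Fin (N+1)) →L[ℝ] ℝ :=
  EuclideanSpace.proj (Fin.last N)

lemma quad_contDiff_s7 {N : ℕ} (a b c : ℝ) :
    ContDiff ℝ 2 (fun x : EuclideanSpace ℝ (Fin (N+1)) =>
      a + b * Lproj N x + c * (Lproj N x * Lproj N x)) := by
  have hL : ContDiff ℝ 2 (fun x : EuclideanSpace ℝ (Fin (N+1)) => Lproj N x) :=
    (Lproj N).contDiff
  exact (contDiff_const.add (contDiff_const.mul hL)).add (contDiff_const.mul (hL.mul hL))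

lemma quad_hasFDerivAt {N : ℕ} (a b c : ℝ) (x : EuclideanSpace ℝ (Fin (N+1))) :
    HasFDerivAt (fun x : EuclideanSpace ℝ (Fin (N+1)) =>
      a + b * Lproj N x + c * (Lproj N x * Lproj N x))
      ((b + 2 * c * Lproj N x) • (Lproj N)) x := by
  have h1 : HasFDerivAt (fun x : EuclideanSpace ℝ (Fin (N+1)) => Lproj N x) (Lproj N) x :=
    (Lproj N).hasFDerivAt
  have h := ((hasFDerivAt_const a x).add (h1.const_mul b)).add ((h1.mul h1).const_mul c)
  refine h.congr_fderiv ?_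
  ext w
  simp
  ring

lemma quad_hess {N : ℕ} (a b c : ℝ) (x : EuclideanSpace ℝ (Fin (N+1))) (i j : Fin (N+1)) :
    hess (fun x : EuclideanSpace ℝ (Fin (N+1)) =>
      a + b * Lproj N x + c * (Lproj N x * Lproj N x)) x i j
      = 2 * c * ((if Fin.last N = i then (1:ℝ) else 0) * (if Fin.last N = j then (1:ℝ) else 0)) := by
  set A : EuclideanSpace ℝ (Fin (N+1)) →L[ℝ] (EuclideanSpace ℝ (Fin (N+1)) →L[ℝ] ℝ) :=
    ((2*c) • (Lproj N)).smulRight (Lproj N) with hA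
  have hfd : fderiv ℝ (fun x : EuclideanSpace ℝ (Fin (N+1)) =>
      a + b * Lproj N x + c * (Lproj N x * Lproj N x))
      = fun x => (b + 2 * c * Lproj N x) • (Lproj N) :=
    funext fun x => (quad_hasFDerivAt a b c x).fderiv
  have hD : HasFDerivAt (fun x : EuclideanSpace ℝ (Fin (N+1)) =>
      (b + 2 * c * Lproj N x) • (Lproj N)) A x := by
    have h := (A.hasFDerivAt (x := x)).add_const (b • (Lproj N))
    refine h.congr_of_eventuallyEq (Filter.Eventually.of_forall fun y => ?_)
    ext w
    simp [hA]
    ring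
  have h2 : fderiv ℝ (fderiv ℝ (fun x : EuclideanSpace ℝ (Fin (N+1)) =>
      a + b * Lproj N x + c * (Lproj N x * Lproj N x))) x = A := by
    rw [hfd]; exact hD.fderiv
  unfold hess
  rw [iteratedFDeriv_two_apply, h2]
  simp [hA, Lproj, EuclideanSpace.single_apply,
    apply_ite (fun f : EuclideanSpace ℝ (Fin (N+1)) →L[ℝ] ℝ => f (EuclideanSpace.single j 1))]
  split <;> split <;> simp

lemma truncLap_nonneg {N k : ℕ} {X : Matrix (Fin N) (Fin N) ℝ}
    (hX : ∀ w : Fin N → ℝ, 0 ≤ dotProduct (X.mulVec w) w) :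
    0 ≤ truncLap k X := by
  apply Real.sInf_nonneg
  rintro s ⟨v, -, rfl⟩
  exact Finset.sum_nonneg fun i _ => hX (v i)

lemma psd_quad {N : ℕ} (c : ℝ) (hc : 0 ≤ c) (i₀ : Fin N)
    (X : Matrix (Fin N) (Fin N) ℝ)
    (hXe : ∀ i j, X i j = 2 * c * ((if i₀ = i then (1:ℝ) else 0) * (if i₀ = j then (1:ℝ) else 0)))
    (w : Fin N → ℝ) : 0 ≤ dotProduct (X.mulVec w) w := by
  have : dotProduct (X.mulVec w) w = 2 * c * (w i₀ * w i₀) := by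
    simp only [dotProduct, Matrix.mulVec, hXe]
    simp [Finset.mul_sum, Finset.sum_ite_eq, mul_ite, ite_mul, Finset.mul_sum]
    ring
  rw [this]
  nlinarith [mul_self_nonneg (w i₀)]

lemma lsc_min {f : ℝ → ℝ} (hf : LowerSemicontinuous f) {a b : ℝ} (hab : a ≤ b) :
    ∃ t ∈ Set.Icc a b, ∀ s ∈ Set.Icc a b, f t ≤ f s := by
  classical
  set C := {c : ℝ | (Set.Icc a b ∩ f ⁻¹' Set.Iic c).Nonempty} with hC
  have hCne : (f a) ∈ C := ⟨a, ⟨le_refl a, hab⟩, Set.mem_preimage.2 Set.self_mem_Iic⟩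
  haveI : Nonempty C := ⟨⟨f a, hCne⟩⟩
  set Z : C → Set ℝ := fun c => Set.Icc a b ∩ f ⁻¹' Set.Iic c.1 with hZ
  have hdir : Directed (· ⊇ ·) Z := by
    intro c d
    rcases le_total c.1 d.1 with h | h
    · exact ⟨c, subset_rfl,
        Set.inter_subset_inter_right _ (Set.preimage_mono (Set.Iic_subset_Iic.2 h))⟩
    · exact ⟨d, Set.inter_subset_inter_right _ (Set.preimage_mono (Set.Iic_subset_Iic.2 h)),
        subset_rfl⟩
  have hne : ∀ c : C, (Z c).Nonempty := fun c => c.2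
  have hcl : ∀ c : C, IsClosed (Z c) := fun c => isClosed_Icc.inter (hf.isClosed_preimage c.1)
  have hcpt : ∀ c : C, IsCompact (Z c) := fun c =>
    isCompact_Icc.inter_right (hf.isClosed_preimage c.1)
  obtain ⟨t, ht⟩ :=
    IsCompact.nonempty_iInter_of_directed_nonempty_isCompact_isClosed Z hdir hne hcpt hcl
  simp only [Set.mem_iInter] at ht
  have htI : t ∈ Set.Icc a b := (ht ⟨f a, hCne⟩).1
  exact ⟨t, htI, fun s hs => (ht ⟨f s, ⟨s, hs, Set.mem_preimage.2 Set.self_mem_Iic⟩⟩).2⟩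

/-- a nonnegative LSC one-dimensional viscosity supersolution of
`P⁻ₖ(D²u) + u - u³ = 0` in `ℝ^N` with `|u| < 1` which is nondecreasing in the
`x_N`-direction must vanish on a half-space `{x_N ≤ t₀}`. -/
theorem stmt7 {n : ℕ} (k : ℕ) (hk1 : 1 ≤ k) (hk2 : k ≤ n + 1)
    (u : EuclideanSpace ℝ (Fin (n + 2)) → ℝ) (v : ℝ → ℝ)
    (hlsc : LowerSemicontinuous u)
    (h1d : ∀ x, u x = v (x (Fin.last (n + 1))))
    (hnn : ∀ x, 0 ≤ u x) (hbd : ∀ x, |u x| < 1)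
    (hmono : Monotone v)
    (hsup : IsViscSupersol k (fun s => s - s ^ 3) u) :
    ∃ t₀ : ℝ, ∀ t ≤ t₀, v t = 0 := by
  classical
  have hsingle : ∀ t : ℝ,
      (EuclideanSpace.single (Fin.last (n+1)) t) (Fin.last (n+1)) = t := by
    intro t; simp [EuclideanSpace.single_apply]
  have hv0 : ∀ t, 0 ≤ v t := by
    intro t
    have := hnn (EuclideanSpace.single (Fin.last (n+1)) t)
    rwa [h1d, hsingle] at this
  have hv1 : ∀ t, v t < 1 := by
    intro t
    have := hbd (EuclideanSpace.single (Fin.last (n+1)) t)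
    rw [h1d, hsingle] at this
    exact (abs_lt.1 this).2
  -- v is lower semicontinuous
  have hlscv : LowerSemicontinuous v := by
    have hcont : Continuous (fun t : ℝ =>
        t • (EuclideanSpace.single (Fin.last (n+1)) (1:ℝ))) :=
      continuous_id.smul continuous_const
    have heq : v = fun t : ℝ =>
        u (t • (EuclideanSpace.single (Fin.last (n+1)) (1:ℝ))) := by
      funext t
      rw [h1d]
      congr 1
      simp [EuclideanSpace.single_apply]
    rw [heq]
    exact LowerSemicontinuous.comp hlsc hcont
  -- key: testing with a convex quadratic forces v = 0 at local minima
  have key : ∀ a b c : ℝ, 0 ≤ c → ∀ t₀ : ℝ,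
      IsLocalMin (fun t => v t - (a + b * t + c * (t * t))) t₀ → v t₀ = 0 := by
    intro a b c hc t₀ hmin
    set φ : EuclideanSpace ℝ (Fin (n+2)) → ℝ := fun x =>
      a + b * Lproj (n+1) x + c * (Lproj (n+1) x * Lproj (n+1) x) with hφ
    set x₀ : EuclideanSpace ℝ (Fin (n+2)) := EuclideanSpace.single (Fin.last (n+1)) t₀ with hx₀
    have hgx : Lproj (n+1) x₀ = t₀ := by simp [Lproj, hx₀, EuclideanSpace.single_apply]
    have hmin' : IsLocalMin (fun x => u x - φ x) x₀ := by
      have hc' : ContinuousAt (fun x : EuclideanSpace ℝ (Fin (n+2)) => Lproj (n+1) x) x₀ :=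
        (Lproj (n+1)).continuous.continuousAt
      have hmin2 : IsLocalMin (fun t => v t - (a + b * t + c * (t * t)))
          (Lproj (n+1) x₀) := by rw [hgx]; exact hmin
      have h := hmin2.comp_continuous hc'
      have heq : (fun x => u x - φ x)
          = (fun t => v t - (a + b * t + c * (t * t))) ∘
            (fun x : EuclideanSpace ℝ (Fin (n+2)) => Lproj (n+1) x) := by
        funext x
        simp only [Function.comp_apply, hφ]
        rw [h1d]
        rfl
      rw [heq]
      exact h
    have hs := hsup φ (quad_contDiff_s7 a b c) x₀ hmin'
    have htr : 0 ≤ truncLap k (hess φ x₀) :=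
      truncLap_nonneg (psd_quad c hc (Fin.last (n+1)) _ (quad_hess a b c x₀))
    have hu : u x₀ = v t₀ := by rw [h1d, hx₀, hsingle]
    rw [hu] at hs
    have h3 : v t₀ - v t₀ ^ 3 ≤ 0 := by
      simp only at hs
      linarith
    have h0 := hv0 t₀
    have h1 := hv1 t₀
    nlinarith [sq_nonneg (v t₀)]
  -- dichotomy: v lies above all its chords, or not
  by_cases hconc : ∀ a b t : ℝ, a < b → t ∈ Set.Icc a b →
      v a + (v b - v a) * (t - a) / (b - a) ≤ v t
  · -- "concave" case: v must be constant, hence 0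
    by_cases hstrict : ∃ s t : ℝ, s < t ∧ v s < v t
    · exfalso
      obtain ⟨s, t, hst, hvst⟩ := hstrict
      set x : ℝ := min (s - 1) ((v s * t - v t * s) / (v s - v t) - 1) with hx
      have hxs : x < s := lt_of_le_of_lt (min_le_left _ _) (by linarith)
      have hxt : x < t := hxs.trans hst
      have hxB : x < (v s * t - v t * s) / (v s - v t) :=
        lt_of_le_of_lt (min_le_right _ _) (by linarith)
      have hneg : v s - v t < 0 := by linarith
      have hxB' : v s * t - v t * s < x * (v s - v t) := (lt_div_iff_of_neg hneg).1 hxB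
      have hch := hconc x t s hxt ⟨hxs.le, hst.le⟩
      have hch' : (v t - v x) * (s - x) / (t - x) ≤ v s - v x := by linarith
      rw [div_le_iff₀ (by linarith : (0:ℝ) < t - x)] at hch'
      have hvx := hv0 x
      nlinarith [mul_nonneg hvx (by linarith : (0:ℝ) ≤ t - s)]
    · -- v is constant
      push_neg at hstrict
      have hconst : ∀ t : ℝ, v t = v 0 := by
        intro t
        rcases lt_trichotomy t 0 with h | h | h
        · exact le_antisymm (hmono h.le) (by simpa using hstrict t 0 h)
        · rw [h]
        · exact le_antisymm (by simpa using hstrict 0 t h) (hmono h.le)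
      have hmin0 : IsLocalMin (fun t => v t - ((0:ℝ) + 0 * t + 0 * (t * t))) 0 := by
        apply Filter.Eventually.of_forall
        intro t
        simp [hconst t]
      have := key 0 0 0 le_rfl 0 hmin0
      exact ⟨0, fun t ht => by rw [hconst t, this]⟩
  · -- non-concave case: bend a chord to create an interior minimum
    push_neg at hconc
    obtain ⟨a, b, m, hab, hm, hlt⟩ := hconc
    have hba : b - a ≠ 0 := ne_of_gt (by linarith)
    have ham : a < m := by
      rcases eq_or_lt_of_le hm.1 with h | h
      · exfalso; rw [← h] at hlt; simp at hlt
      · exact h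
    have hmb : m < b := by
      rcases eq_or_lt_of_le hm.2 with h | h
      · exfalso
        rw [h] at hlt
        rw [mul_div_assoc, div_self hba, mul_one] at hlt
        linarith
      · exact h
    -- build the bent chord test function
    obtain ⟨slope, hslope⟩ : ∃ x : ℝ, x = (v b - v a) / (b - a) := ⟨_, rfl⟩
    obtain ⟨S, hS⟩ : ∃ x : ℝ, x = v a + (v b - v a) * (m - a) / (b - a) := ⟨_, rfl⟩
    rw [← hS] at hlt
    have hma : (0:ℝ) < m - a := by linarith
    have hbm : (0:ℝ) < b - m := by linarith
    obtain ⟨ε, hε⟩ : ∃ x : ℝ, x = (S - v m) / (2 * ((m - a) * (b - m))) := ⟨_, rfl⟩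
    have hεpos : 0 < ε := by rw [hε]; exact div_pos (by linarith) (by positivity)
    obtain ⟨a', ha'⟩ : ∃ x : ℝ, x = v a - slope * a + ε * (a * b) := ⟨_, rfl⟩
    obtain ⟨b', hb'⟩ : ∃ x : ℝ, x = slope - ε * (a + b) := ⟨_, rfl⟩
    obtain ⟨q, hq⟩ : ∃ f : ℝ → ℝ, f = fun t => a' + b' * t + ε * (t * t) := ⟨_, rfl⟩
    have hqa : q a = v a := by rw [hq]; simp only; rw [ha', hb']; ring
    have hsl : slope * (b - a) = v b - v a := by
      rw [hslope]; field_simp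
    have hqb : q b = v b := by
      rw [hq]; simp only; rw [ha', hb']
      linear_combination hsl
    have hqm : q m = (S + v m) / 2 := by
      rw [hq]; simp only
      have h1 : a' + b' * m + ε * (m * m)
          = v a + slope * (m - a) - ε * ((m - a) * (b - m)) := by rw [ha', hb']; ring
      have h2 : ε * ((m - a) * (b - m)) = (S - v m) / 2 := by
        rw [hε]; field_simp
      have h3 : v a + slope * (m - a) = S := by rw [hS, hslope]; ring
      rw [h1, h2, h3]; ring
    have hqcont : Continuous q := by
      rw [hq]; fun_prop
    have hlscg : LowerSemicontinuous (fun t => v t - q t) := by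
      have heq : (fun t => v t - q t) = fun t => v t + (-(q t)) := by funext t; ring
      rw [heq]
      exact hlscv.add (hqcont.neg.lowerSemicontinuous)
    obtain ⟨t₁, ht₁I, ht₁min⟩ := lsc_min hlscg hab.le
    have hgm : v m - q m < 0 := by rw [hqm]; linarith
    have hg1 : v t₁ - q t₁ < 0 := lt_of_le_of_lt (ht₁min m ⟨ham.le, hmb.le⟩) hgm
    have ha1 : a < t₁ := by
      rcases eq_or_lt_of_le ht₁I.1 with h | h
      · exfalso; rw [← h, hqa] at hg1; linarith
      · exact h
    have hb1 : t₁ < b := by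
      rcases eq_or_lt_of_le ht₁I.2 with h | h
      · exfalso; rw [h, hqb] at hg1; linarith
      · exact h
    have hminloc : IsLocalMin (fun t => v t - (a' + b' * t + ε * (t * t))) t₁ := by
      have hnb : Set.Icc a b ∈ nhds t₁ := Icc_mem_nhds ha1 hb1
      have : IsLocalMin (fun t => v t - q t) t₁ :=
        Filter.eventually_of_mem hnb fun s hs => ht₁min s hs
      rwa [hq] at this
    have hv₁ := key a' b' ε hεpos.le t₁ hminloc
    exact ⟨t₁, fun t ht => le_antisymm (le_of_le_of_eq (hmono ht) hv₁) (hv0 t)⟩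
end

section
/- Let N ≥ 2 and 1 ≤ k ≤ N−1. There is no continuous one-dimensional function u : ℝ^N → ℝ (u(x) = v(x_N) for some v : ℝ → ℝ) with |u(x)| < 1 for all x, such that u is a viscosity solution of P⁻_k(D²u) + u − u³ = 0 in ℝ^N and v is strictly increasing on ℝ. -/
set_option linter.unreachableTactic false
set_option linter.unusedTactic false

noncomputable def pr (n : ℕ) : EuclideanSpace ℝ (Fin (n+2)) →L[ℝ] ℝ :=
  EuclideanSpace.proj (Fin.last (n+1))

lemma pr_apply {n : ℕ} (x : EuclideanSpace ℝ (Fin (n+2))) : pr n x = x (Fin.last (n+1)) := rfl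

lemma hasFDerivAt_Phi {n : ℕ} (a b c : ℝ) (x : EuclideanSpace ℝ (Fin (n+2))) :
    HasFDerivAt (fun x => a + b * pr n x + c * (pr n x)^2)
      ((b + 2*c*(pr n x)) • (pr n)) x := by
  have h1 : HasDerivAt (fun t : ℝ => a + b * t + c * t^2) (b + 2*c*(pr n x)) (pr n x) := by
    have hb : HasDerivAt (fun t : ℝ => a + b * t) b (pr n x) := by
      simpa using ((hasDerivAt_id (pr n x)).const_mul b).const_add a
    have hc : HasDerivAt (fun t : ℝ => c * t^2) (c * (2 * pr n x ^ 1)) (pr n x) :=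
      (hasDerivAt_pow 2 (pr n x)).const_mul c
    have := hb.add hc
    refine this.congr_deriv ?_
    ring
  have := h1.comp_hasFDerivAt x ((pr n).hasFDerivAt)
  exact this

lemma contDiff_Phi {n : ℕ} (a b c : ℝ) :
    ContDiff ℝ 2 (fun x : EuclideanSpace ℝ (Fin (n+2)) => a + b * pr n x + c * (pr n x)^2) := by
  have h : ContDiff ℝ 2 (fun x : EuclideanSpace ℝ (Fin (n+2)) => pr n x) := (pr n).contDiff
  exact (contDiff_const.add (contDiff_const.mul h)).add (contDiff_const.mul (h.pow 2))

lemma hess_Phi {n : ℕ} (a b c : ℝ) (x : EuclideanSpace ℝ (Fin (n+2))) :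
    hess (fun x => a + b * pr n x + c * (pr n x)^2) x
      = fun i j => (2*c) * (if i = Fin.last (n+1) then 1 else 0)
          * (if j = Fin.last (n+1) then 1 else 0) := by
  have hfd : fderiv ℝ (fun x : EuclideanSpace ℝ (Fin (n+2)) => a + b * pr n x + c * (pr n x)^2)
      = fun x => (b + 2*c*(pr n x)) • (pr n) :=
    funext fun x => (hasFDerivAt_Phi a b c x).fderiv
  have hfd2 : ∀ y, HasFDerivAt (fun x : EuclideanSpace ℝ (Fin (n+2)) => (b + 2*c*(pr n x)) • (pr n))
      (((2*c) • (pr n)).smulRight (pr n)) y := by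
    intro y
    have h1 : HasFDerivAt (fun x : EuclideanSpace ℝ (Fin (n+2)) => b + 2*c*(pr n x))
        ((2*c) • (pr n)) y := by
      simpa using (((pr n).hasFDerivAt (x := y)).const_mul (2*c)).const_add b
    exact h1.smul_const (pr n)
  funext i j
  show iteratedFDeriv ℝ 2 _ x ![EuclideanSpace.single i 1, EuclideanSpace.single j 1] = _
  rw [iteratedFDeriv_two_apply, hfd, (hfd2 x).fderiv]
  have hsingle : ∀ i' : Fin (n+2), pr n (EuclideanSpace.single i' (1:ℝ))
      = if i' = Fin.last (n+1) then 1 else 0 := by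
    intro i'
    rw [pr_apply, EuclideanSpace.single_apply]
    simp [eq_comm]
  by_cases hi : i = Fin.last (n+1) <;> by_cases hj : j = Fin.last (n+1) <;>
    simp [hi, hj, ContinuousLinearMap.smulRight_apply, ContinuousLinearMap.smul_apply,
      hsingle, smul_eq_mul] <;> try ring

lemma quadform_eval {n : ℕ} (c : ℝ) (w : Fin (n+2) → ℝ) :
    dotProduct
      (Matrix.mulVec (fun i j => c * (if i = Fin.last (n+1) then (1:ℝ) else 0)
          * (if j = Fin.last (n+1) then 1 else 0)) w) w
      = c * (w (Fin.last (n+1)))^2 := by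
  have hrow : ∀ i, Matrix.mulVec (fun i j => c * (if i = Fin.last (n+1) then (1:ℝ) else 0)
      * (if j = Fin.last (n+1) then 1 else 0)) w i
      = c * (if i = Fin.last (n+1) then (1:ℝ) else 0) * w (Fin.last (n+1)) := by
    intro i
    simp only [Matrix.mulVec, dotProduct]
    rw [Finset.sum_eq_single (Fin.last (n+1))]
    · simp
    · intro b _ hb; rw [if_neg hb]; ring
    · intro h; exact absurd (Finset.mem_univ _) h
  unfold dotProduct
  rw [Finset.sum_congr rfl (fun i _ => by rw [hrow i])]
  rw [Finset.sum_eq_single (Fin.last (n+1))]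
  · simp; ring
  · intro b _ hb; rw [if_neg hb]; ring
  · intro h; exact absurd (Finset.mem_univ _) h

lemma truncLap_diag {n : ℕ} (k : ℕ) (hk1 : 1 ≤ k) (hk : k ≤ n+1) (c : ℝ) (hc : 0 ≤ c) :
    truncLap k (fun i j => c * (if i = Fin.last (n+1) then (1:ℝ) else 0)
        * (if j = Fin.last (n+1) then 1 else 0) : Matrix (Fin (n+2)) (Fin (n+2)) ℝ) = 0 := by
  have hkle : k ≤ n + 2 := by omega
  set X : Matrix (Fin (n+2)) (Fin (n+2)) ℝ :=
    (fun i j => c * (if i = Fin.last (n+1) then (1:ℝ) else 0)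
        * (if j = Fin.last (n+1) then 1 else 0)) with hX
  have hXval : ∀ w : Fin (n+2) → ℝ,
      dotProduct (X.mulVec w) w = c * (w (Fin.last (n+1)))^2 := fun w =>
    quadform_eval c w
  set e : Fin k → (Fin (n+2) → ℝ) := fun i => Pi.single (Fin.castLE hkle i) 1 with he
  have horth : ∀ i j, dotProduct (e i) (e j) = if i = j then (1:ℝ) else 0 := by
    intro i j
    rw [he]
    simp only [dotProduct_single]
    rw [Pi.single_apply]
    by_cases h : i = j
    · simp [h]
    · have hne : Fin.castLE hkle j ≠ Fin.castLE hkle i := by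
        intro hv
        exact h ((Fin.castLE_injective hkle hv).symm)
      rw [if_neg hne, if_neg h]; ring
  have hzero : (0:ℝ) ∈ { s : ℝ | ∃ v : Fin k → (Fin (n+2) → ℝ),
      (∀ i j, dotProduct (v i) (v j) = if i = j then (1 : ℝ) else 0) ∧
      s = ∑ i, dotProduct (X.mulVec (v i)) (v i) } := by
    refine ⟨e, horth, ?_⟩
    rw [eq_comm, Finset.sum_eq_zero]
    intro i _
    rw [hXval]
    have hlast : e i (Fin.last (n+1)) = 0 := by
      rw [he]
      apply Pi.single_eq_of_ne
      intro hv
      have h1 : (Fin.last (n+1) : Fin (n+2)).val = n+1 := rfl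
      have h2 : (Fin.castLE hkle i).val = i.val := rfl
      have h3 := i.isLt
      rw [Fin.ext_iff, h1, h2] at hv
      omega
    rw [hlast]; ring
  have hnonneg : ∀ s ∈ { s : ℝ | ∃ v : Fin k → (Fin (n+2) → ℝ),
      (∀ i j, dotProduct (v i) (v j) = if i = j then (1 : ℝ) else 0) ∧
      s = ∑ i, dotProduct (X.mulVec (v i)) (v i) }, (0:ℝ) ≤ s := by
    rintro s ⟨w, -, rfl⟩
    apply Finset.sum_nonneg
    intro i _
    rw [hXval]
    positivity
  unfold truncLap
  apply le_antisymm
  · exact csInf_le ⟨0, hnonneg⟩ hzero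
  · exact le_csInf ⟨0, hzero⟩ hnonneg

lemma pr_single {n : ℕ} (t : ℝ) :
    pr n (EuclideanSpace.single (Fin.last (n+1)) t) = t := by
  rw [pr_apply, EuclideanSpace.single_apply]; simp

lemma isLocalMax_lift {n : ℕ} {g : ℝ → ℝ} {t : ℝ} (h : IsLocalMax g t) :
    IsLocalMax (fun x : EuclideanSpace ℝ (Fin (n+2)) => g (pr n x))
      (EuclideanSpace.single (Fin.last (n+1)) t) := by
  have htend : Filter.Tendsto (pr n)
      (nhds (EuclideanSpace.single (Fin.last (n+1)) t)) (nhds t) := by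
    have h2 := ((pr n).continuous.continuousAt
      (x := (EuclideanSpace.single (Fin.last (n+1)) t : EuclideanSpace ℝ (Fin (n+2)))))
    rwa [ContinuousAt, pr_single] at h2
  have hev : ∀ᶠ x in nhds (EuclideanSpace.single (Fin.last (n+1)) t),
      g (pr n x) ≤ g t := htend.eventually h
  have : IsLocalMax (fun x : EuclideanSpace ℝ (Fin (n+2)) => g (pr n x))
      (EuclideanSpace.single (Fin.last (n+1)) t) := by
    unfold IsLocalMax IsMaxFilter
    simpa [pr_single] using hev
  exact this

lemma isLocalMin_lift {n : ℕ} {g : ℝ → ℝ} {t : ℝ} (h : IsLocalMin g t) :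
    IsLocalMin (fun x : EuclideanSpace ℝ (Fin (n+2)) => g (pr n x))
      (EuclideanSpace.single (Fin.last (n+1)) t) := by
  have htend : Filter.Tendsto (pr n)
      (nhds (EuclideanSpace.single (Fin.last (n+1)) t)) (nhds t) := by
    have h2 := ((pr n).continuous.continuousAt
      (x := (EuclideanSpace.single (Fin.last (n+1)) t : EuclideanSpace ℝ (Fin (n+2)))))
    rwa [ContinuousAt, pr_single] at h2
  have hev : ∀ᶠ x in nhds (EuclideanSpace.single (Fin.last (n+1)) t),
      g t ≤ g (pr n x) := htend.eventually h
  unfold IsLocalMin IsMinFilter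
  simpa [pr_single] using hev

/-- there is no continuous one-dimensional viscosity solution of
`P⁻ₖ(D²u) + u - u³ = 0` in `ℝ^N` with `|u| < 1` whose profile is strictly increasing. -/
theorem stmt8 {n : ℕ} (k : ℕ) (hk1 : 1 ≤ k) (hk2 : k ≤ n + 1) :
    ¬ ∃ (u : EuclideanSpace ℝ (Fin (n + 2)) → ℝ) (v : ℝ → ℝ),
      Continuous u ∧
      (∀ x, u x = v (x (Fin.last (n + 1)))) ∧
      (∀ x, |u x| < 1) ∧
      IsViscSubsol k (fun s => s - s ^ 3) u ∧
      IsViscSupersol k (fun s => s - s ^ 3) u ∧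
      StrictMono v := by
  rintro ⟨u, v, hu, huv, hbd, hsub, hsup, hmono⟩
  -- basic facts about v
  have hvt : ∀ t : ℝ, u (EuclideanSpace.single (Fin.last (n+1)) t) = v t := by
    intro t
    rw [huv]
    congr 1
    rw [EuclideanSpace.single_apply]; simp
  have hvbd : ∀ t : ℝ, |v t| < 1 := fun t => by rw [← hvt t]; exact hbd _
  have hvlt1 : ∀ t, v t < 1 := fun t => (abs_lt.mp (hvbd t)).2
  have hvgt : ∀ t, -1 < v t := fun t => (abs_lt.mp (hvbd t)).1
  have hι : Continuous (fun t : ℝ =>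
      (EuclideanSpace.single (Fin.last (n+1)) t : EuclideanSpace ℝ (Fin (n+2)))) := by
    have heq : (fun t : ℝ =>
        (EuclideanSpace.single (Fin.last (n+1)) t : EuclideanSpace ℝ (Fin (n+2))))
        = fun t => t • (EuclideanSpace.single (Fin.last (n+1)) (1:ℝ)) := by
      funext t
      ext j
      rw [PiLp.smul_apply, EuclideanSpace.single_apply, EuclideanSpace.single_apply]
      simp [smul_eq_mul, mul_ite]
    rw [heq]
    exact continuous_id.smul continuous_const
  have hv_cont : Continuous v := by
    have : v = fun t => u (EuclideanSpace.single (Fin.last (n+1)) t) :=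
      funext fun t => (hvt t).symm
    rw [this]; exact hu.comp hι
  by_cases hneg : ∃ t, v t < 0
  · -- Case 1: v is negative somewhere; use the subsolution property with a parabola
    obtain ⟨t₁, ht₁⟩ := hneg
    set m : ℝ := t₁ - 1 with hm
    set g : ℝ → ℝ := fun t => v t - (3*m^2 + (-(6*m)) * t + 3 * t^2) with hg
    have hgc : Continuous g := by
      apply hv_cont.sub
      fun_prop
    obtain ⟨ts, hts_mem, hts_max⟩ :=
      (isCompact_Icc (a := t₁ - 2) (b := t₁)).exists_isMaxOn
        (Set.nonempty_Icc.mpr (by linarith)) hgc.continuousOn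
    have hgm_le : g m ≤ g ts := hts_max (by rw [Set.mem_Icc, hm]; constructor <;> linarith)
    have hgm : g m = v m := by
      show v m - (3*m^2 + (-(6*m)) * m + 3 * m^2) = v m
      ring
    have hgp : g (t₁ - 2) = v (t₁ - 2) - 3 := by
      show v (t₁ - 2) - (3*m^2 + (-(6*m)) * (t₁ - 2) + 3 * (t₁ - 2)^2) = v (t₁ - 2) - 3
      rw [hm]; ring
    have hgq : g t₁ = v t₁ - 3 := by
      show v t₁ - (3*m^2 + (-(6*m)) * t₁ + 3 * t₁^2) = v t₁ - 3
      rw [hm]; ring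
    have hts_lb : -1 < g ts := by
      have h2 := hvgt m
      rw [← hgm] at h2
      linarith
    have hne1 : ts ≠ t₁ - 2 := by
      intro h; rw [h, hgp] at hts_lb; linarith [hvlt1 (t₁ - 2)]
    have hne2 : ts ≠ t₁ := by
      intro h; rw [h, hgq] at hts_lb; linarith [hvlt1 t₁]
    have hIoo : ts ∈ Set.Ioo (t₁ - 2) t₁ :=
      ⟨lt_of_le_of_ne hts_mem.1 (Ne.symm hne1), lt_of_le_of_ne hts_mem.2 hne2⟩
    have hlocg : IsLocalMax g ts := hts_max.isLocalMax (Icc_mem_nhds hIoo.1 hIoo.2)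
    set x₀ : EuclideanSpace ℝ (Fin (n+2)) := EuclideanSpace.single (Fin.last (n+1)) ts with hx₀
    have hlift := isLocalMax_lift (n := n) hlocg
    have hfeq : (fun x : EuclideanSpace ℝ (Fin (n+2)) =>
        u x - (3*m^2 + (-(6*m)) * pr n x + 3 * (pr n x)^2)) = fun x => g (pr n x) := by
      funext x
      rw [hg]
      simp only [huv x, pr_apply]
    have hloc' : IsLocalMax (fun x : EuclideanSpace ℝ (Fin (n+2)) =>
        u x - (3*m^2 + (-(6*m)) * pr n x + 3 * (pr n x)^2)) x₀ := by
      rw [hfeq, hx₀]; exact hlift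
    have hkey := hsub (fun x => 3*m^2 + (-(6*m)) * pr n x + 3 * (pr n x)^2)
      (contDiff_Phi _ _ _) x₀ hloc'
    rw [hess_Phi (3*m^2) (-(6*m)) 3 x₀] at hkey
    rw [truncLap_diag k hk1 hk2 (2*3) (by norm_num)] at hkey
    have hux : u x₀ = v ts := hvt ts
    have hkey' : (0:ℝ) ≤ 0 + (v ts - v ts ^ 3) := by
      rw [← hux]
      simpa using hkey
    have h2 : v ts < 0 := lt_trans (hmono hIoo.2) ht₁
    have h3 : -1 < v ts := hvgt ts
    nlinarith [mul_pos (neg_pos.mpr h2) (by nlinarith : (0:ℝ) < 1 - v ts ^ 2)]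
  · -- Case 2: v > 0 everywhere; use the supersolution property with a chord
    push_neg at hneg
    have hvpos : ∀ t, 0 < v t := fun t => lt_of_le_of_lt (hneg (t-1)) (hmono (by linarith))
    set d : ℝ := v 1 - v 0 with hd
    have hdpos : 0 < d := sub_pos.mpr (hmono one_pos)
    set T : ℝ := -(2/d) - 1 with hT
    have hTneg : T < 0 := by
      have : 0 < 2/d := by positivity
      rw [hT]; linarith
    have h1T : 0 < 1 - T := by linarith
    set s : ℝ := (v 1 - v T)/(1 - T) with hs
    set g : ℝ → ℝ := fun t => v t - ((v T - T * s) + s * t + 0 * t^2) with hg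
    have hgc : Continuous g := by
      apply hv_cont.sub
      fun_prop
    have hgT : g T = 0 := by rw [hg]; ring_nf
    have hg1 : g 1 = 0 := by
      rw [hg]
      simp only
      rw [hs]
      field_simp
      ring
    have hg0 : g 0 < 0 := by
      have hTd : T * d = -2 - d := by
        rw [hT]
        field_simp
      have key : (v 0 - v T) * (1 - T) + T * (v 1 - v T) < 0 := by
        have expand : (v 0 - v T) * (1 - T) + T * (v 1 - v T) = v 0 - v T + T * d := by
          rw [hd]; ring
        rw [expand, hTd]
        linarith [hvpos T, hvlt1 0]
      have hrepr : g 0 = ((v 0 - v T) * (1 - T) + T * (v 1 - v T)) / (1 - T) := by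
        rw [hg]
        simp only
        rw [hs]
        field_simp
        ring
      rw [hrepr]
      exact div_neg_of_neg_of_pos key h1T
    obtain ⟨ts, hts_mem, hts_min⟩ :=
      (isCompact_Icc (a := T) (b := 1)).exists_isMinOn
        (Set.nonempty_Icc.mpr (by linarith)) hgc.continuousOn
    have hg0_le : g ts ≤ g 0 := hts_min ⟨by linarith, by linarith⟩
    have hneg' : g ts < 0 := lt_of_le_of_lt hg0_le hg0
    have hne1 : ts ≠ T := by intro h; rw [h, hgT] at hneg'; linarith
    have hne2 : ts ≠ 1 := by intro h; rw [h, hg1] at hneg'; linarith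
    have hIoo : ts ∈ Set.Ioo T 1 :=
      ⟨lt_of_le_of_ne hts_mem.1 (Ne.symm hne1), lt_of_le_of_ne hts_mem.2 hne2⟩
    have hlocg : IsLocalMin g ts := hts_min.isLocalMin (Icc_mem_nhds hIoo.1 hIoo.2)
    set x₀ : EuclideanSpace ℝ (Fin (n+2)) := EuclideanSpace.single (Fin.last (n+1)) ts with hx₀
    have hlift := isLocalMin_lift (n := n) hlocg
    have hfeq : (fun x : EuclideanSpace ℝ (Fin (n+2)) =>
        u x - ((v T - T * s) + s * pr n x + 0 * (pr n x)^2)) = fun x => g (pr n x) := by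
      funext x
      rw [hg]
      simp only [huv x, pr_apply]
    have hloc' : IsLocalMin (fun x : EuclideanSpace ℝ (Fin (n+2)) =>
        u x - ((v T - T * s) + s * pr n x + 0 * (pr n x)^2)) x₀ := by
      rw [hfeq, hx₀]; exact hlift
    have hkey := hsup (fun x => (v T - T * s) + s * pr n x + 0 * (pr n x)^2)
      (contDiff_Phi _ _ _) x₀ hloc'
    rw [hess_Phi (v T - T * s) s 0 x₀] at hkey
    rw [truncLap_diag k hk1 hk2 (2*0) (by norm_num)] at hkey
    have hux : u x₀ = v ts := hvt ts
    have hkey' : (0:ℝ) + (v ts - v ts ^ 3) ≤ 0 := by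
      rw [← hux]
      simpa using hkey
    have h2 : 0 < v ts := hvpos ts
    have h3 : v ts < 1 := hvlt1 ts
    nlinarith [mul_pos h2 (by nlinarith : (0:ℝ) < 1 - v ts ^ 2)]
end
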